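/- For every ε > 0 there exists C > 0 such that for every real N ≥ 1 and every v ∈ ℓ²(ℤ; ℂ): define, for n ∈ ℤ, Q(n) := ∑ over all (n₁, n₂, n₃, m₁, m₂, m₃) ∈ ℤ⁶ satisfying n = n₁ − n₂ + n₃ with n₂ ∉ {n₁, n₃}, n₁ = m₁ − m₂ + m₃ with m₂ ∉ {m₁, m₃}, |μ₁| > N, and |μ₁ + μ₂| ≤ 125 · |μ₁|^{1 − 1/100}, of (1/|μ₁|) · |v_{m₁}| |v_{m₂}| |v_{m₃}| |v_{n₂}| |v_{n₃}|, where μ₁ := 2(n − n₁)(n − n₃) and μ₂ := 2(n₁ − m₁)(n₁ − m₃). Then Q (a sum of nonnegative terms) is finite for every n, belongs to ℓ²(ℤ), and ‖Q‖ ≤ C N^{−1/200 + ε} ‖v‖⁵. -/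

import Mathlib

open scoped BigOperators

/-- The ℓ²(ℤ;ℂ) norm `(∑ₙ |vₙ|²)^{1/2}`. -/
noncomputable def l2norm (v : ℤ → ℂ) : ℝ := Real.sqrt (∑' n : ℤ, ‖v n‖ ^ 2)

/-- Membership in ℓ²(ℤ;ℂ). -/
def Memℓ2 (v : ℤ → ℂ) : Prop := Summable fun n : ℤ => ‖v n‖ ^ 2

/-- First-generation phase `μ₁ = 2(n − n₁)(n − n₃)`, where `q.1 = (n₁, n₂, n₃)`. -/
def mu1 (n : ℤ) (q : (ℤ × ℤ × ℤ) × (ℤ × ℤ × ℤ)) : ℤ :=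
  2 * (n - q.1.1) * (n - q.1.2.2)

/-- Second-generation phase `μ₂ = 2(n₁ − m₁)(n₁ − m₃)`, where `q.2 = (m₁, m₂, m₃)`. -/
def mu2 (q : (ℤ × ℤ × ℤ) × (ℤ × ℤ × ℤ)) : ℤ :=
  2 * (q.1.1 - q.2.1) * (q.1.1 - q.2.2.2)

/-- Two-generation frequencies in the nearly resonant region
`|μ₁ + μ₂| ≤ 125 |μ₁|^{1 − 1/100}` with `|μ₁| > N`. -/
def cond9 (N : ℝ) (n : ℤ) (q : (ℤ × ℤ × ℤ) × (ℤ × ℤ × ℤ)) : Prop :=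
  n = q.1.1 - q.1.2.1 + q.1.2.2 ∧ q.1.2.1 ≠ q.1.1 ∧ q.1.2.1 ≠ q.1.2.2 ∧
  q.1.1 = q.2.1 - q.2.2.1 + q.2.2.2 ∧ q.2.2.1 ≠ q.2.1 ∧ q.2.2.1 ≠ q.2.2.2 ∧
  N < |((mu1 n q : ℤ) : ℝ)| ∧
  |((mu1 n q + mu2 q : ℤ) : ℝ)| ≤ 125 * |((mu1 n q : ℤ) : ℝ)| ^ ((1:ℝ) - 1/100)

/-- The summand `(1/|μ₁|) |v_{m₁}| |v_{m₂}| |v_{m₃}| |v_{n₂}| |v_{n₃}|`. -/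
noncomputable def term9 (v : ℤ → ℂ) (n : ℤ) (q : (ℤ × ℤ × ℤ) × (ℤ × ℤ × ℤ)) : ℝ :=
  1 / |((mu1 n q : ℤ) : ℝ)| *
    (‖v q.2.1‖ * ‖v q.2.2.1‖ * ‖v q.2.2.2‖ * ‖v q.1.2.1‖ * ‖v q.1.2.2‖)

/-- The majorant `Q(n)` of the nearly resonant quintic term `N⁽²⁾₁` of the second generation. -/
noncomputable def Q9 (N : ℝ) (v : ℤ → ℂ) (n : ℤ) : ℝ :=
  ∑' q : {q : (ℤ × ℤ × ℤ) × (ℤ × ℤ × ℤ) // cond9 N n q}, term9 v n q.1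

open scoped ENNReal

noncomputable section N21Aux

open Classical in
/-- Indicator of a proposition, valued in `ℝ≥0∞`. -/
noncomputable def bi (P : Prop) : ℝ≥0∞ := if P then 1 else 0

lemma bi_of {P : Prop} (h : P) : bi P = 1 := by simp [bi, h]
lemma bi_not {P : Prop} (h : ¬ P) : bi P = 0 := by simp [bi, h]
lemma bi_le_one (P : Prop) : bi P ≤ 1 := by by_cases h : P <;> simp [bi, h]
lemma bi_mono {P Q : Prop} (h : P → Q) : bi P ≤ bi Q := by
  by_cases hP : P
  · rw [bi_of hP, bi_of (h hP)]
  · rw [bi_not hP]; exact zero_le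
lemma bi_and (P Q : Prop) : bi (P ∧ Q) = bi P * bi Q := by
  by_cases hP : P <;> by_cases hQ : Q <;> simp [bi, hP, hQ]
lemma bi_le_add {P Q R : Prop} (h : P → Q ∨ R) : bi P ≤ bi Q + bi R := by
  by_cases hP : P
  · rcases h hP with h' | h'
    · rw [bi_of h']; exact le_add_of_le_of_nonneg (bi_le_one P) zero_le
    · rw [bi_of h']; exact le_add_of_nonneg_of_le zero_le (bi_le_one P)
  · rw [bi_not hP]; exact zero_le
lemma bi_sq (P : Prop) : bi P * bi P = bi P := by by_cases h : P <;> simp [bi, h]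

/-- Cauchy–Schwarz (with constant 2) for `ℝ≥0∞`-valued tsums. -/
lemma tsum_CS {ι : Type*} (t F G : ι → ℝ≥0∞) (h : ∀ i, t i ≤ F i * G i) :
    (∑' i, t i) ^ 2 ≤ 2 * ((∑' i, F i ^ 2) * (∑' i, G i ^ 2)) := by
  have h1 : (∑' i, t i) ^ 2 ≤ (∑' i, F i * G i) ^ 2 :=
    pow_le_pow_left' (Summable.tsum_le_tsum h ENNReal.summable ENNReal.summable) 2
  refine h1.trans ?_
  have expand : (∑' i, F i * G i) ^ 2 = ∑' i, ∑' j, (F i * G i) * (F j * G j) := by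
    rw [sq]
    rw [← ENNReal.tsum_mul_right]
    exact tsum_congr fun i => by rw [← ENNReal.tsum_mul_left]
  rw [expand]
  have key : ∀ i j : ι, (F i * G i) * (F j * G j) ≤ F i ^ 2 * G j ^ 2 + F j ^ 2 * G i ^ 2 := by
    intro i j
    have h2 : (F i * G j) * (F j * G i) ≤ (F i * G j) ^ 2 + (F j * G i) ^ 2 := by
      rcases le_total (F i * G j) (F j * G i) with hc | hc
      · calc (F i * G j) * (F j * G i) ≤ (F j * G i) * (F j * G i) := mul_le_mul_left hc _
          _ = (F j * G i) ^ 2 := (sq _).symm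
          _ ≤ _ := le_add_self
      · calc (F i * G j) * (F j * G i) ≤ (F i * G j) * (F i * G j) := mul_le_mul_right hc _
          _ = (F i * G j) ^ 2 := (sq _).symm
          _ ≤ _ := le_self_add
    calc (F i * G i) * (F j * G j) = (F i * G j) * (F j * G i) := by ring
      _ ≤ (F i * G j) ^ 2 + (F j * G i) ^ 2 := h2
      _ = F i ^ 2 * G j ^ 2 + F j ^ 2 * G i ^ 2 := by ring
  calc ∑' i, ∑' j, (F i * G i) * (F j * G j)
      ≤ ∑' i, ∑' j, (F i ^ 2 * G j ^ 2 + F j ^ 2 * G i ^ 2) := by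
        refine Summable.tsum_le_tsum (fun i => Summable.tsum_le_tsum (fun j => key i j) ENNReal.summable ENNReal.summable) ENNReal.summable ENNReal.summable
    _ = 2 * ((∑' i, F i ^ 2) * (∑' i, G i ^ 2)) := by
        have : ∀ i : ι, ∑' j, (F i ^ 2 * G j ^ 2 + F j ^ 2 * G i ^ 2)
            = F i ^ 2 * (∑' j, G j ^ 2) + (∑' j, F j ^ 2) * G i ^ 2 := by
          intro i
          rw [ENNReal.tsum_add, ENNReal.tsum_mul_left, ENNReal.tsum_mul_right]
        rw [tsum_congr this, ENNReal.tsum_add, ENNReal.tsum_mul_right, ENNReal.tsum_mul_left]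
        ring

lemma bi_congr {P Q : Prop} (h : P ↔ Q) : bi P = bi Q :=
  le_antisymm (bi_mono h.mp) (bi_mono h.mpr)

/-- Number of integers in a real interval `[u, w]`. -/
lemma count_interval (u w : ℝ) :
    ∑' β : ℤ, bi (u ≤ (β : ℝ) ∧ (β : ℝ) ≤ w) ≤ ENNReal.ofReal (w - u + 1) := by
  have hsupp : ∀ β : ℤ, β ∉ Finset.Icc ⌈u⌉ ⌊w⌋ → bi (u ≤ (β : ℝ) ∧ (β : ℝ) ≤ w) = 0 := by
    intro β hβ
    refine bi_not fun hc => hβ ?_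
    rw [Finset.mem_Icc]
    exact ⟨Int.ceil_le.mpr hc.1, Int.le_floor.mpr hc.2⟩
  rw [tsum_eq_sum hsupp]
  by_cases hle : ⌈u⌉ ≤ ⌊w⌋
  · calc ∑ β ∈ Finset.Icc ⌈u⌉ ⌊w⌋, bi (u ≤ (β : ℝ) ∧ (β : ℝ) ≤ w)
        ≤ ∑ _β ∈ Finset.Icc ⌈u⌉ ⌊w⌋, 1 := Finset.sum_le_sum fun β _ => bi_le_one _
      _ = ((Finset.Icc ⌈u⌉ ⌊w⌋).card : ℝ≥0∞) := by simp
      _ ≤ ENNReal.ofReal (w - u + 1) := by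
          rw [Int.card_Icc, ← ENNReal.ofReal_natCast]
          refine ENNReal.ofReal_le_ofReal ?_
          have h1 : ((⌊w⌋ + 1 - ⌈u⌉).toNat : ℝ) = ((⌊w⌋ : ℝ) + 1 - (⌈u⌉ : ℝ)) := by
            have h2 : (0:ℤ) ≤ ⌊w⌋ + 1 - ⌈u⌉ := by omega
            rw [show ((⌊w⌋ + 1 - ⌈u⌉).toNat : ℝ) = (((⌊w⌋ + 1 - ⌈u⌉).toNat : ℤ) : ℝ) from by push_cast; ring,
              Int.toNat_of_nonneg h2]
            push_cast; ring
          rw [h1]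
          have := Int.floor_le w
          have := Int.le_ceil u
          linarith
  · have : Finset.Icc ⌈u⌉ ⌊w⌋ = ∅ := Finset.Icc_eq_empty hle
    rw [this, Finset.sum_empty]
    exact zero_le

/-- Counting `β` with `2αβ` in a window of length `L`. -/
lemma count_dilated (α : ℤ) (hα : α ≠ 0) (x L : ℝ) (hL : 0 ≤ L) :
    ∑' β : ℤ, bi (x ≤ ((2 * α * β : ℤ) : ℝ) ∧ ((2 * α * β : ℤ) : ℝ) ≤ x + L)
      ≤ ENNReal.ofReal (L / (2 * |(α : ℝ)|) + 1) := by
  set A : ℝ := 2 * (α : ℝ) with hA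
  have hA0 : A ≠ 0 := by
    simp only [hA, mul_ne_zero_iff]
    exact ⟨two_ne_zero, Int.cast_ne_zero.mpr hα⟩
  have key : ∀ β : ℤ, (x ≤ ((2 * α * β : ℤ) : ℝ) ∧ ((2 * α * β : ℤ) : ℝ) ≤ x + L) →
      (min (x / A) ((x + L) / A) ≤ (β : ℝ) ∧ (β : ℝ) ≤ max (x / A) ((x + L) / A)) := by
    intro β hβ
    have hcast : ((2 * α * β : ℤ) : ℝ) = (β : ℝ) * A := by push_cast [hA]; ring
    rw [hcast] at hβ
    rcases lt_or_gt_of_ne hA0 with hneg | hpos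
    · constructor
      · exact le_trans (min_le_right _ _) ((div_le_iff_of_neg hneg).mpr hβ.2)
      · exact le_trans ((le_div_iff_of_neg hneg).mpr hβ.1) (le_max_left _ _)
    · constructor
      · exact le_trans (min_le_left _ _) ((div_le_iff₀ hpos).mpr hβ.1)
      · exact le_trans ((le_div_iff₀ hpos).mpr hβ.2) (le_max_right _ _)
  calc ∑' β : ℤ, bi (x ≤ ((2 * α * β : ℤ) : ℝ) ∧ ((2 * α * β : ℤ) : ℝ) ≤ x + L)
      ≤ ∑' β : ℤ, bi (min (x / A) ((x + L) / A) ≤ (β : ℝ) ∧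
          (β : ℝ) ≤ max (x / A) ((x + L) / A)) :=
        Summable.tsum_le_tsum (fun β => bi_mono (key β)) ENNReal.summable ENNReal.summable
    _ ≤ ENNReal.ofReal (max (x / A) ((x + L) / A) - min (x / A) ((x + L) / A) + 1) :=
        count_interval _ _
    _ = ENNReal.ofReal (L / (2 * |(α : ℝ)|) + 1) := by
        congr 1
        rw [max_sub_min_eq_abs]
        have hd : (x + L) / A - x / A = L / A := by ring
        rw [hd, abs_div, abs_of_nonneg hL, hA, abs_mul, abs_two]

/-- Summing the per-`α` counts over `0 < |α| ≤ R`. -/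
lemma count_half (x L R : ℝ) (hL : 0 ≤ L) (hR : 1 ≤ R) :
    ∑' p : ℤ × ℤ, bi ((p.1 ≠ 0 ∧ |(p.1 : ℝ)| ≤ R) ∧
        (x ≤ ((2 * p.1 * p.2 : ℤ) : ℝ) ∧ ((2 * p.1 * p.2 : ℤ) : ℝ) ≤ x + L))
      ≤ ENNReal.ofReal (L * (1 + Real.log R) + 2 * R) := by
  set h : ℤ → ℝ≥0∞ := fun α =>
    bi (α ≠ 0 ∧ |(α : ℝ)| ≤ R) * ENNReal.ofReal (L / (2 * |(α : ℝ)|) + 1) with hh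
  have step1 : ∑' p : ℤ × ℤ, bi ((p.1 ≠ 0 ∧ |(p.1 : ℝ)| ≤ R) ∧
      (x ≤ ((2 * p.1 * p.2 : ℤ) : ℝ) ∧ ((2 * p.1 * p.2 : ℤ) : ℝ) ≤ x + L)) ≤ ∑' α : ℤ, h α := by
    rw [ENNReal.tsum_prod (f := fun α β : ℤ => bi ((α ≠ 0 ∧ |(α : ℝ)| ≤ R) ∧
      (x ≤ ((2 * α * β : ℤ) : ℝ) ∧ ((2 * α * β : ℤ) : ℝ) ≤ x + L)))]
    refine Summable.tsum_le_tsum (fun α => ?_) ENNReal.summable ENNReal.summable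
    by_cases hα : α = 0
    · have : ∀ β : ℤ, bi ((α ≠ 0 ∧ |(α : ℝ)| ≤ R) ∧
          (x ≤ ((2 * α * β : ℤ) : ℝ) ∧ ((2 * α * β : ℤ) : ℝ) ≤ x + L)) = 0 := fun β =>
        bi_not (fun hc => hc.1.1 hα)
      simp only [this, tsum_zero]
      exact zero_le
    · calc ∑' β : ℤ, bi ((α ≠ 0 ∧ |(α : ℝ)| ≤ R) ∧
          (x ≤ ((2 * α * β : ℤ) : ℝ) ∧ ((2 * α * β : ℤ) : ℝ) ≤ x + L))
          = bi (α ≠ 0 ∧ |(α : ℝ)| ≤ R) *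
            ∑' β : ℤ, bi (x ≤ ((2 * α * β : ℤ) : ℝ) ∧ ((2 * α * β : ℤ) : ℝ) ≤ x + L) := by
            rw [← ENNReal.tsum_mul_left]
            exact tsum_congr fun β => bi_and _ _
        _ ≤ h α := by
            rw [hh]
            exact mul_le_mul_right (count_dilated α hα x L hL) _
  refine step1.trans ?_
  -- now the one-dimensional sum
  set M : ℤ := ⌊R⌋ with hM
  have hM1 : 1 ≤ M := by rwa [hM, Int.le_floor, Int.cast_one]
  have hMR : (M : ℝ) ≤ R := Int.floor_le R
  have hsupp : ∀ α : ℤ, α ∉ Finset.Icc (-M) M → h α = 0 := by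
    intro α hα
    rw [Finset.mem_Icc, not_and_or] at hα
    have : ¬ (α ≠ 0 ∧ |(α : ℝ)| ≤ R) := by
      rintro ⟨-, habs⟩
      have h1 : ((|α| : ℤ) : ℝ) ≤ R := by rw [Int.cast_abs]; exact habs
      have h2 : |α| ≤ M := by rwa [hM, Int.le_floor]
      have h4 := abs_le.mp h2
      rcases hα with h3 | h3
      · exact h3 h4.1
      · exact h3 h4.2
    rw [hh]; simp [bi_not this]
  rw [tsum_eq_sum hsupp]
  have hsplit : Finset.Icc (-M) M = Finset.Icc (-M) (-1) ∪ Finset.Icc 0 M := by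
    ext α; simp only [Finset.mem_Icc, Finset.mem_union]; omega
  have hdisj : Disjoint (Finset.Icc (-M) (-1)) (Finset.Icc (0:ℤ) M) := by
    rw [Finset.disjoint_left]; intro a ha hb
    simp only [Finset.mem_Icc] at ha hb; omega
  rw [hsplit, Finset.sum_union hdisj]
  have hneg : ∑ α ∈ Finset.Icc (-M) (-1), h α = ∑ α ∈ Finset.Icc 1 M, h α := by
    refine Finset.sum_nbij' (i := fun α => -α) (j := fun α => -α) ?_ ?_ ?_ ?_ ?_
    · intro a ha; simp only [Finset.mem_Icc] at *; omega
    · intro a ha; simp only [Finset.mem_Icc] at *; omega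
    · intro a _; ring
    · intro a _; ring
    · intro a _
      rw [hh]
      simp only [neg_ne_zero, Int.cast_neg, abs_neg]
  have hzero : ∑ α ∈ Finset.Icc (0:ℤ) M, h α = ∑ α ∈ Finset.Icc 1 M, h α := by
    have : Finset.Icc (0:ℤ) M = insert 0 (Finset.Icc 1 M) := by
      ext α; simp only [Finset.mem_Icc, Finset.mem_insert]; omega
    rw [this, Finset.sum_insert (by simp)]
    have h0 : h 0 = 0 := by simp [hh, bi]
    rw [h0, zero_add]
  rw [hneg, hzero, ← two_mul]
  -- bound the positive-side sum
  have hbound : ∑ α ∈ Finset.Icc (1:ℤ) M, h α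
      ≤ ENNReal.ofReal (∑ α ∈ Finset.Icc (1:ℤ) M, (L / (2 * |(α : ℝ)|) + 1)) := by
    calc ∑ α ∈ Finset.Icc (1:ℤ) M, h α
        ≤ ∑ α ∈ Finset.Icc (1:ℤ) M, ENNReal.ofReal (L / (2 * |(α : ℝ)|) + 1) := by
          refine Finset.sum_le_sum fun α hα => ?_
          calc h α ≤ 1 * ENNReal.ofReal (L / (2 * |(α : ℝ)|) + 1) :=
                mul_le_mul_left (bi_le_one _) _
            _ = _ := one_mul _
      _ = ENNReal.ofReal (∑ α ∈ Finset.Icc (1:ℤ) M, (L / (2 * |(α : ℝ)|) + 1)) := by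
          rw [ENNReal.ofReal_sum_of_nonneg]
          intro α hα
          have : (0:ℝ) ≤ L / (2 * |(α : ℝ)|) := by positivity
          linarith
  -- the real sum estimate
  have hreal : ∑ α ∈ Finset.Icc (1:ℤ) M, (L / (2 * |(α : ℝ)|) + 1)
      ≤ L / 2 * (1 + Real.log R) + R := by
    rw [Finset.sum_add_distrib]
    have hc : ∑ α ∈ Finset.Icc (1:ℤ) M, (1:ℝ) ≤ R := by
      rw [Finset.sum_const, Int.card_Icc]
      have he : M + 1 - 1 = M := by ring
      rw [he, nsmul_eq_mul, mul_one]
      have : ((M.toNat : ℕ) : ℝ) = (M : ℝ) := by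
        exact_mod_cast congrArg (fun z : ℤ => (z : ℝ)) (Int.toNat_of_nonneg (by omega))
      rw [this]
      exact hMR
    have hharm : ∑ α ∈ Finset.Icc (1:ℤ) M, L / (2 * |(α : ℝ)|) ≤ L / 2 * (1 + Real.log R) := by
      have hmap : ∑ α ∈ Finset.Icc (1:ℤ) M, L / (2 * |(α : ℝ)|)
          = ∑ j ∈ Finset.Icc 1 M.toNat, L / (2 * (j : ℝ)) := by
        refine Finset.sum_nbij' (i := fun α => α.toNat) (j := fun jj => (jj : ℤ)) ?_ ?_ ?_ ?_ ?_
        · intro a ha; simp only [Finset.mem_Icc] at *; omega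
        · intro a ha; simp only [Finset.mem_Icc] at *; omega
        · intro a ha; simp only [Finset.mem_Icc] at ha; omega
        · intro a ha; simp only [Finset.mem_Icc] at ha; omega
        · intro a ha
          simp only [Finset.mem_Icc] at ha
          congr 2
          have h5 : ((a.toNat : ℕ) : ℝ) = (a : ℝ) := by
            exact_mod_cast congrArg (fun z : ℤ => (z : ℝ)) (Int.toNat_of_nonneg (by omega))
          rw [h5, abs_of_nonneg (by exact_mod_cast (by omega : (0:ℤ) ≤ a))]
      rw [hmap]
      have : ∑ j ∈ Finset.Icc 1 M.toNat, L / (2 * (j : ℝ))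
          = L / 2 * ∑ j ∈ Finset.Icc 1 M.toNat, ((j : ℝ))⁻¹ := by
        rw [Finset.mul_sum]
        exact Finset.sum_congr rfl fun j _ => by field_simp
      rw [this]
      have hsum : ∑ j ∈ Finset.Icc 1 M.toNat, ((j : ℝ))⁻¹ = ((harmonic M.toNat : ℚ) : ℝ) := by
        rw [harmonic_eq_sum_Icc]
        push_cast
        rfl
      rw [hsum]
      have h1 : ((harmonic M.toNat : ℚ) : ℝ) ≤ 1 + Real.log M.toNat := harmonic_le_one_add_log _
      have h2 : Real.log M.toNat ≤ Real.log R := by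
        have h6 : (0:ℝ) < (M.toNat : ℝ) := by
          have : (1:ℕ) ≤ M.toNat := by omega
          exact_mod_cast Nat.lt_of_lt_of_le Nat.zero_lt_one this
        refine Real.log_le_log h6 ?_
        have : ((M.toNat : ℕ) : ℝ) = (M : ℝ) := by
          exact_mod_cast congrArg (fun z : ℤ => (z : ℝ)) (Int.toNat_of_nonneg (by omega))
        rw [this]; exact hMR
      have hL2 : (0:ℝ) ≤ L / 2 := by positivity
      nlinarith [Real.log_nonneg (by exact_mod_cast (by omega : (1:ℕ) ≤ M.toNat) : (1:ℝ) ≤ (M.toNat:ℝ))]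
    linarith
  calc 2 * ∑ α ∈ Finset.Icc (1:ℤ) M, h α
      ≤ 2 * ENNReal.ofReal (L / 2 * (1 + Real.log R) + R) := by
        exact mul_le_mul_right (hbound.trans (ENNReal.ofReal_le_ofReal hreal)) 2
    _ = ENNReal.ofReal (2 * (L / 2 * (1 + Real.log R) + R)) := by
        rw [ENNReal.ofReal_mul (by norm_num)]
        norm_num
    _ ≤ ENNReal.ofReal (L * (1 + Real.log R) + 2 * R) := by
        exact ENNReal.ofReal_le_ofReal (le_of_eq (by ring))

lemma log_le_200 {K : ℝ} (hK : 1 ≤ K) : Real.log K ≤ 200 * K ^ ((1:ℝ)/200) := by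
  have := Real.log_le_rpow_div (by linarith : (0:ℝ) ≤ K) (by norm_num : (0:ℝ) < 1/200)
  calc Real.log K ≤ K ^ ((1:ℝ)/200) / (1/200) := this
    _ = 200 * K ^ ((1:ℝ)/200) := by ring

lemma numer_bound {K : ℝ} (hK : 1 ≤ K) :
    2 * (250 * K ^ ((99:ℝ)/100) * (1 + Real.log (Real.sqrt K)) + 2 * Real.sqrt K)
      ≤ 200000 * K ^ ((199:ℝ)/200) := by
  have hK0 : (0:ℝ) < K := by linarith
  have hsq : Real.sqrt K = K ^ ((1:ℝ)/2) := by rw [Real.sqrt_eq_rpow]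
  have h12 : K ^ ((1:ℝ)/2) ≤ K ^ ((199:ℝ)/200) :=
    Real.rpow_le_rpow_of_exponent_le hK (by norm_num)
  have h99 : K ^ ((99:ℝ)/100) ≤ K ^ ((199:ℝ)/200) :=
    Real.rpow_le_rpow_of_exponent_le hK (by norm_num)
  have hlog : Real.log (Real.sqrt K) ≤ 200 * K ^ ((1:ℝ)/200) := by
    have h1 : Real.sqrt K ≤ K := by
      rw [hsq]
      calc K ^ ((1:ℝ)/2) ≤ K ^ ((1:ℝ)) := Real.rpow_le_rpow_of_exponent_le hK (by norm_num)
        _ = K := Real.rpow_one K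
    calc Real.log (Real.sqrt K) ≤ Real.log K :=
          Real.log_le_log (Real.sqrt_pos.mpr hK0) h1
      _ ≤ 200 * K ^ ((1:ℝ)/200) := log_le_200 hK
  have hmul : K ^ ((99:ℝ)/100) * K ^ ((1:ℝ)/200) = K ^ ((199:ℝ)/200) := by
    rw [← Real.rpow_add hK0]; norm_num
  have hpos1 : (0:ℝ) ≤ K ^ ((99:ℝ)/100) := (Real.rpow_pos_of_pos hK0 _).le
  have hpos2 : (0:ℝ) ≤ K ^ ((1:ℝ)/200) := (Real.rpow_pos_of_pos hK0 _).le
  have key : 250 * K ^ ((99:ℝ)/100) * (1 + Real.log (Real.sqrt K))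
      ≤ 250 * K ^ ((99:ℝ)/100) + 50000 * K ^ ((199:ℝ)/200) := by
    have h2 : 250 * K ^ ((99:ℝ)/100) * (1 + Real.log (Real.sqrt K))
        ≤ 250 * K ^ ((99:ℝ)/100) * (1 + 200 * K ^ ((1:ℝ)/200)) := by
      refine mul_le_mul_of_nonneg_left (by linarith) (by positivity)
    calc 250 * K ^ ((99:ℝ)/100) * (1 + Real.log (Real.sqrt K))
        ≤ 250 * K ^ ((99:ℝ)/100) * (1 + 200 * K ^ ((1:ℝ)/200)) := h2
      _ = 250 * K ^ ((99:ℝ)/100) + 50000 * (K ^ ((99:ℝ)/100) * K ^ ((1:ℝ)/200)) := by ring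
      _ = 250 * K ^ ((99:ℝ)/100) + 50000 * K ^ ((199:ℝ)/200) := by rw [hmul]
  have hs : Real.sqrt K ≤ K ^ ((199:ℝ)/200) := hsq ▸ h12
  nlinarith [h99]

/-- Real-variable estimate used for the `(c,d)` count. -/
lemma realA {N s : ℝ} (hN : 1 ≤ N) (hs : N ≤ s) :
    2 * (250 * s ^ ((99:ℝ)/100) * (1 + Real.log (Real.sqrt (126 * s))) + 2 * Real.sqrt (126 * s))
      ≤ 25200000 * (s * N ^ (-((1:ℝ)/200))) := by
  have hs1 : 1 ≤ s := le_trans hN hs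
  have hs0 : (0:ℝ) < s := by linarith
  have hN0 : (0:ℝ) < N := by linarith
  have hK1 : (1:ℝ) ≤ 126 * s := by linarith
  have hbase : s ^ ((99:ℝ)/100) ≤ (126 * s) ^ ((99:ℝ)/100) :=
    Real.rpow_le_rpow (by linarith) (by linarith) (by norm_num)
  have step1 : 2 * (250 * s ^ ((99:ℝ)/100) * (1 + Real.log (Real.sqrt (126 * s)))
      + 2 * Real.sqrt (126 * s))
      ≤ 2 * (250 * (126*s) ^ ((99:ℝ)/100) * (1 + Real.log (Real.sqrt (126 * s)))
      + 2 * Real.sqrt (126 * s)) := by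
    have hlog0 : (0:ℝ) ≤ 1 + Real.log (Real.sqrt (126 * s)) := by
      have : (1:ℝ) ≤ Real.sqrt (126 * s) := Real.one_le_sqrt.mpr hK1
      have := Real.log_nonneg this
      linarith
    nlinarith
  have step2 := numer_bound hK1
  have step3 : (200000:ℝ) * (126*s) ^ ((199:ℝ)/200) ≤ 25200000 * (s * N ^ (-((1:ℝ)/200))) := by
    have hsplit : ((126:ℝ)*s) ^ ((199:ℝ)/200) = (126:ℝ) ^ ((199:ℝ)/200) * s ^ ((199:ℝ)/200) :=
      Real.mul_rpow (by norm_num) hs0.le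
    have h126 : (126:ℝ) ^ ((199:ℝ)/200) ≤ 126 := by
      calc (126:ℝ) ^ ((199:ℝ)/200) ≤ (126:ℝ) ^ ((1:ℝ)) :=
            Real.rpow_le_rpow_of_exponent_le (by norm_num) (by norm_num)
        _ = 126 := Real.rpow_one _
    have hss : s ^ ((199:ℝ)/200) = s * s ^ (-((1:ℝ)/200)) := by
      rw [show (199:ℝ)/200 = 1 + (-((1:ℝ)/200)) by norm_num, Real.rpow_add hs0, Real.rpow_one]
    have hmono : s ^ (-((1:ℝ)/200)) ≤ N ^ (-((1:ℝ)/200)) := by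
      rw [Real.rpow_neg hs0.le, Real.rpow_neg hN0.le]
      have h1 : N ^ ((1:ℝ)/200) ≤ s ^ ((1:ℝ)/200) := Real.rpow_le_rpow hN0.le hs (by norm_num)
      have h2 : (0:ℝ) < N ^ ((1:ℝ)/200) := Real.rpow_pos_of_pos hN0 _
      exact inv_anti₀ h2 h1
    have hsp : (0:ℝ) ≤ s ^ ((199:ℝ)/200) := (Real.rpow_pos_of_pos hs0 _).le
    calc (200000:ℝ) * (126*s) ^ ((199:ℝ)/200)
        = 200000 * ((126:ℝ) ^ ((199:ℝ)/200) * s ^ ((199:ℝ)/200)) := by rw [hsplit]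
      _ ≤ 200000 * (126 * s ^ ((199:ℝ)/200)) := by nlinarith
      _ = 25200000 * (s * s ^ (-((1:ℝ)/200))) := by rw [← hss]; ring
      _ ≤ 25200000 * (s * N ^ (-((1:ℝ)/200))) := by nlinarith
  linarith

/-- Real-variable estimate used for the `(a,b)` count. -/
lemma realB {N m K : ℝ} (hN : 1 ≤ N) (hm : N ≤ m) (hK : 1 ≤ K)
    (hKm : K ≤ (250:ℝ)^(100:ℕ) * m) :
    2 * (250 * K ^ ((99:ℝ)/100) * (1 + Real.log (Real.sqrt K)) + 2 * Real.sqrt K) * m⁻¹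
      ≤ 200000 * (250:ℝ)^(100:ℕ) * N ^ (-((1:ℝ)/200)) := by
  have hm0 : (0:ℝ) < m := by linarith
  have hN0 : (0:ℝ) < N := by linarith
  have hA1 : (1:ℝ) ≤ (250:ℝ)^(100:ℕ) := one_le_pow₀ (by norm_num)
  have step2 := numer_bound hK
  have hKA : K ^ ((199:ℝ)/200) ≤ ((250:ℝ)^(100:ℕ)) * m ^ ((199:ℝ)/200) := by
    calc K ^ ((199:ℝ)/200) ≤ ((250:ℝ)^(100:ℕ) * m) ^ ((199:ℝ)/200) :=
          Real.rpow_le_rpow (by linarith) hKm (by norm_num)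
      _ = ((250:ℝ)^(100:ℕ)) ^ ((199:ℝ)/200) * m ^ ((199:ℝ)/200) :=
          Real.mul_rpow (by positivity) hm0.le
      _ ≤ ((250:ℝ)^(100:ℕ)) * m ^ ((199:ℝ)/200) := by
          have h1 : ((250:ℝ)^(100:ℕ)) ^ ((199:ℝ)/200) ≤ ((250:ℝ)^(100:ℕ)) ^ ((1:ℝ)) :=
            Real.rpow_le_rpow_of_exponent_le hA1 (by norm_num)
          rw [Real.rpow_one] at h1
          have h2 : (0:ℝ) ≤ m ^ ((199:ℝ)/200) := (Real.rpow_pos_of_pos hm0 _).le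
          nlinarith
  have hmm : m ^ ((199:ℝ)/200) * m⁻¹ = m ^ (-((1:ℝ)/200)) := by
    rw [← Real.rpow_neg_one m, ← Real.rpow_add hm0]
    norm_num
  have hmono : m ^ (-((1:ℝ)/200)) ≤ N ^ (-((1:ℝ)/200)) := by
    rw [Real.rpow_neg hm0.le, Real.rpow_neg hN0.le]
    have h1 : N ^ ((1:ℝ)/200) ≤ m ^ ((1:ℝ)/200) := Real.rpow_le_rpow hN0.le hm (by norm_num)
    have h2 : (0:ℝ) < N ^ ((1:ℝ)/200) := Real.rpow_pos_of_pos hN0 _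
    exact inv_anti₀ h2 h1
  have hminv : (0:ℝ) ≤ m⁻¹ := by positivity
  calc 2 * (250 * K ^ ((99:ℝ)/100) * (1 + Real.log (Real.sqrt K)) + 2 * Real.sqrt K) * m⁻¹
      ≤ 200000 * K ^ ((199:ℝ)/200) * m⁻¹ := mul_le_mul_of_nonneg_right step2 hminv
    _ ≤ 200000 * (((250:ℝ)^(100:ℕ)) * m ^ ((199:ℝ)/200)) * m⁻¹ := by nlinarith
    _ = 200000 * ((250:ℝ)^(100:ℕ)) * (m ^ ((199:ℝ)/200) * m⁻¹) := by ring
    _ = 200000 * ((250:ℝ)^(100:ℕ)) * m ^ (-((1:ℝ)/200)) := by rw [hmm]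
    _ ≤ 200000 * (250:ℝ)^(100:ℕ) * N ^ (-((1:ℝ)/200)) := by
        have : (0:ℝ) ≤ 200000 * ((250:ℝ)^(100:ℕ)) := by positivity
        nlinarith

/-- Master counting bound: pairs `(α, β)` with `2αβ` in a window of length `L`
and `|2αβ| ≤ K`. -/
lemma count_key (x L K : ℝ) (hL : 0 ≤ L) (hK : 1 ≤ K) :
    ∑' p : ℤ × ℤ, bi (p.1 ≠ 0 ∧ p.2 ≠ 0 ∧ |((2 * p.1 * p.2 : ℤ) : ℝ)| ≤ K ∧
        (x ≤ ((2 * p.1 * p.2 : ℤ) : ℝ) ∧ ((2 * p.1 * p.2 : ℤ) : ℝ) ≤ x + L))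
      ≤ ENNReal.ofReal (2 * (L * (1 + Real.log (Real.sqrt K)) + 2 * Real.sqrt K)) := by
  have hR : 1 ≤ Real.sqrt K := Real.one_le_sqrt.mpr hK
  have hsplit : ∀ p : ℤ × ℤ, (p.1 ≠ 0 ∧ p.2 ≠ 0 ∧ |((2 * p.1 * p.2 : ℤ) : ℝ)| ≤ K ∧
      (x ≤ ((2 * p.1 * p.2 : ℤ) : ℝ) ∧ ((2 * p.1 * p.2 : ℤ) : ℝ) ≤ x + L)) →
      ((p.1 ≠ 0 ∧ |(p.1 : ℝ)| ≤ Real.sqrt K) ∧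
        (x ≤ ((2 * p.1 * p.2 : ℤ) : ℝ) ∧ ((2 * p.1 * p.2 : ℤ) : ℝ) ≤ x + L)) ∨
      ((p.2 ≠ 0 ∧ |(p.2 : ℝ)| ≤ Real.sqrt K) ∧
        (x ≤ ((2 * p.1 * p.2 : ℤ) : ℝ) ∧ ((2 * p.1 * p.2 : ℤ) : ℝ) ≤ x + L)) := by
    rintro ⟨α, β⟩ ⟨hα, hβ, habs, hwin⟩
    have hcase : |(α : ℝ)| ≤ Real.sqrt K ∨ |(β : ℝ)| ≤ Real.sqrt K := by
      by_contra hc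
      push_neg at hc
      have h1 : Real.sqrt K < |(α : ℝ)| := hc.1
      have h2 : Real.sqrt K < |(β : ℝ)| := hc.2
      have h3 : K < |(α:ℝ)| * |(β:ℝ)| := by
        have h0 : (0:ℝ) ≤ Real.sqrt K := Real.sqrt_nonneg K
        nlinarith [Real.sq_sqrt (by linarith : (0:ℝ) ≤ K)]
      have h4 : |((2 * α * β : ℤ) : ℝ)| = 2 * (|(α:ℝ)| * |(β:ℝ)|) := by
        push_cast
        rw [abs_mul, abs_mul]
        simp [abs_two]
        ring
      rw [h4] at habs
      nlinarith [abs_nonneg ((α:ℝ)), abs_nonneg ((β:ℝ))]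
    rcases hcase with h | h
    · exact Or.inl ⟨⟨hα, h⟩, hwin⟩
    · exact Or.inr ⟨⟨hβ, h⟩, hwin⟩
  calc ∑' p : ℤ × ℤ, bi (p.1 ≠ 0 ∧ p.2 ≠ 0 ∧ |((2 * p.1 * p.2 : ℤ) : ℝ)| ≤ K ∧
        (x ≤ ((2 * p.1 * p.2 : ℤ) : ℝ) ∧ ((2 * p.1 * p.2 : ℤ) : ℝ) ≤ x + L))
      ≤ ∑' p : ℤ × ℤ, (bi ((p.1 ≠ 0 ∧ |(p.1 : ℝ)| ≤ Real.sqrt K) ∧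
          (x ≤ ((2 * p.1 * p.2 : ℤ) : ℝ) ∧ ((2 * p.1 * p.2 : ℤ) : ℝ) ≤ x + L)) +
        bi ((p.2 ≠ 0 ∧ |(p.2 : ℝ)| ≤ Real.sqrt K) ∧
          (x ≤ ((2 * p.1 * p.2 : ℤ) : ℝ) ∧ ((2 * p.1 * p.2 : ℤ) : ℝ) ≤ x + L))) :=
        Summable.tsum_le_tsum (fun p => bi_le_add (hsplit p)) ENNReal.summable ENNReal.summable
    _ = (∑' p : ℤ × ℤ, bi ((p.1 ≠ 0 ∧ |(p.1 : ℝ)| ≤ Real.sqrt K) ∧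
          (x ≤ ((2 * p.1 * p.2 : ℤ) : ℝ) ∧ ((2 * p.1 * p.2 : ℤ) : ℝ) ≤ x + L))) +
        ∑' p : ℤ × ℤ, bi ((p.2 ≠ 0 ∧ |(p.2 : ℝ)| ≤ Real.sqrt K) ∧
          (x ≤ ((2 * p.1 * p.2 : ℤ) : ℝ) ∧ ((2 * p.1 * p.2 : ℤ) : ℝ) ≤ x + L)) :=
        ENNReal.tsum_add
    _ ≤ ENNReal.ofReal (L * (1 + Real.log (Real.sqrt K)) + 2 * Real.sqrt K) +
        ENNReal.ofReal (L * (1 + Real.log (Real.sqrt K)) + 2 * Real.sqrt K) := by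
        refine add_le_add (count_half x L _ hL hR) ?_
        have hswap : ∑' p : ℤ × ℤ, bi ((p.2 ≠ 0 ∧ |(p.2 : ℝ)| ≤ Real.sqrt K) ∧
            (x ≤ ((2 * p.1 * p.2 : ℤ) : ℝ) ∧ ((2 * p.1 * p.2 : ℤ) : ℝ) ≤ x + L))
            = ∑' p : ℤ × ℤ, bi ((p.1 ≠ 0 ∧ |(p.1 : ℝ)| ≤ Real.sqrt K) ∧
            (x ≤ ((2 * p.1 * p.2 : ℤ) : ℝ) ∧ ((2 * p.1 * p.2 : ℤ) : ℝ) ≤ x + L)) := by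
          rw [← (Equiv.prodComm ℤ ℤ).tsum_eq (fun p : ℤ × ℤ =>
            bi ((p.1 ≠ 0 ∧ |(p.1 : ℝ)| ≤ Real.sqrt K) ∧
            (x ≤ ((2 * p.1 * p.2 : ℤ) : ℝ) ∧ ((2 * p.1 * p.2 : ℤ) : ℝ) ≤ x + L)))]
          refine tsum_congr fun p => bi_congr ?_
          simp only [Equiv.prodComm_apply, Prod.fst_swap, Prod.snd_swap]
          rw [show (2 * p.2 * p.1 : ℤ) = (2 * p.1 * p.2 : ℤ) from by ring]
        rw [hswap]
        exact count_half x L _ hL hR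
    _ = ENNReal.ofReal (2 * (L * (1 + Real.log (Real.sqrt K)) + 2 * Real.sqrt K)) := by
        have h0 : (0:ℝ) ≤ 1 + Real.log (Real.sqrt K) := by
          have := Real.log_nonneg hR; linarith
        have h1 : (0:ℝ) ≤ L * (1 + Real.log (Real.sqrt K)) + 2 * Real.sqrt K := by positivity
        rw [← ENNReal.ofReal_add h1 h1]
        congr 1
        ring

/-- Counting the second-generation pairs `(c,d)` for a fixed value `k` of `μ₁`. -/
lemma cnt1 {N : ℝ} (hN : 1 ≤ N) {k : ℤ} (hk : N < |(k:ℝ)|) :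
    ∑' p : ℤ × ℤ, bi (p.1 ≠ 0 ∧ p.2 ≠ 0 ∧
        |(k:ℝ) + ((2 * p.1 * p.2 : ℤ) : ℝ)| ≤ 125 * |(k:ℝ)| ^ ((1:ℝ) - 1/100))
      ≤ ENNReal.ofReal (25200000 * (|(k:ℝ)| * N ^ (-((1:ℝ)/200)))) := by
  set s : ℝ := |(k:ℝ)| with hsdef
  have hs1 : 1 ≤ s := le_trans hN hk.le
  have hs0 : (0:ℝ) < s := by linarith
  have hexp : s ^ ((1:ℝ) - 1/100) = s ^ ((99:ℝ)/100) := by norm_num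
  have hL0 : (0:ℝ) ≤ 250 * s ^ ((99:ℝ)/100) := by positivity
  have hK1 : (1:ℝ) ≤ 126 * s := by linarith
  have he : s ^ ((99:ℝ)/100) ≤ s := by
    calc s ^ ((99:ℝ)/100) ≤ s ^ ((1:ℝ)) := Real.rpow_le_rpow_of_exponent_le hs1 (by norm_num)
      _ = s := Real.rpow_one s
  have himp : ∀ p : ℤ × ℤ, (p.1 ≠ 0 ∧ p.2 ≠ 0 ∧
      |(k:ℝ) + ((2 * p.1 * p.2 : ℤ) : ℝ)| ≤ 125 * |(k:ℝ)| ^ ((1:ℝ) - 1/100)) →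
      (p.1 ≠ 0 ∧ p.2 ≠ 0 ∧ |((2 * p.1 * p.2 : ℤ) : ℝ)| ≤ 126 * s ∧
        ((-(k:ℝ) - 125 * s ^ ((99:ℝ)/100)) ≤ ((2 * p.1 * p.2 : ℤ) : ℝ) ∧
          ((2 * p.1 * p.2 : ℤ) : ℝ) ≤ (-(k:ℝ) - 125 * s ^ ((99:ℝ)/100)) + 250 * s ^ ((99:ℝ)/100))) := by
    rintro p ⟨h1, h2, h3⟩
    rw [← hsdef, hexp] at h3
    have h4 := abs_le.mp h3
    have h5 : |(k:ℝ)| ≤ s := le_of_eq hsdef.symm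
    have habs' : |((2 * p.1 * p.2 : ℤ) : ℝ)| ≤ 126 * s := by
      have h6 : |((2 * p.1 * p.2 : ℤ) : ℝ)| ≤ |(k:ℝ) + ((2 * p.1 * p.2 : ℤ) : ℝ)| + |(k:ℝ)| := by
        calc |((2 * p.1 * p.2 : ℤ) : ℝ)|
            = |((k:ℝ) + ((2 * p.1 * p.2 : ℤ) : ℝ)) - (k:ℝ)| := by congr 1; ring
          _ ≤ |(k:ℝ) + ((2 * p.1 * p.2 : ℤ) : ℝ)| + |(k:ℝ)| := abs_sub _ _
      have h7 : |(k:ℝ)| ≤ s := h5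
      nlinarith
    refine ⟨h1, h2, habs', by linarith, by linarith⟩
  calc ∑' p : ℤ × ℤ, bi (p.1 ≠ 0 ∧ p.2 ≠ 0 ∧
        |(k:ℝ) + ((2 * p.1 * p.2 : ℤ) : ℝ)| ≤ 125 * |(k:ℝ)| ^ ((1:ℝ) - 1/100))
      ≤ ∑' p : ℤ × ℤ, bi (p.1 ≠ 0 ∧ p.2 ≠ 0 ∧ |((2 * p.1 * p.2 : ℤ) : ℝ)| ≤ 126 * s ∧
        ((-(k:ℝ) - 125 * s ^ ((99:ℝ)/100)) ≤ ((2 * p.1 * p.2 : ℤ) : ℝ) ∧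
          ((2 * p.1 * p.2 : ℤ) : ℝ) ≤ (-(k:ℝ) - 125 * s ^ ((99:ℝ)/100)) + 250 * s ^ ((99:ℝ)/100))) :=
        Summable.tsum_le_tsum (fun p => bi_mono (himp p)) ENNReal.summable ENNReal.summable
    _ ≤ ENNReal.ofReal (2 * ((250 * s ^ ((99:ℝ)/100)) * (1 + Real.log (Real.sqrt (126 * s)))
          + 2 * Real.sqrt (126 * s))) := count_key _ _ _ hL0 hK1
    _ ≤ ENNReal.ofReal (25200000 * (s * N ^ (-((1:ℝ)/200)))) := by
        refine ENNReal.ofReal_le_ofReal ?_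
        have := realA hN (le_trans hk.le (le_refl s))
        linarith [realA hN (hk.le : N ≤ s)]

/-- Counting the first-generation pairs `(α,β) = (n - n₁, n - n₃)` for fixed `ν = μ₂`. -/
lemma cnt2 {N : ℝ} (hN : 1 ≤ N) {ν : ℤ} (hν : ν ≠ 0) :
    ∑' p : ℤ × ℤ, (bi (p.1 ≠ 0 ∧ p.2 ≠ 0 ∧ N < |((2 * p.1 * p.2 : ℤ) : ℝ)| ∧
        |((2 * p.1 * p.2 : ℤ) : ℝ) + (ν:ℝ)| ≤ 125 * |((2 * p.1 * p.2 : ℤ) : ℝ)| ^ ((1:ℝ) - 1/100))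
        * (ENNReal.ofReal |((2 * p.1 * p.2 : ℤ) : ℝ)|)⁻¹)
      ≤ ENNReal.ofReal (200000 * (250:ℝ)^(100:ℕ) * N ^ (-((1:ℝ)/200))) := by
  set m : ℝ := max N (|(ν:ℝ)| / 126) with hmdef
  set K : ℝ := max ((250:ℝ)^(100:ℕ)) (2 * |(ν:ℝ)|) with hKdef
  have hN0 : (0:ℝ) < N := by linarith
  have hm0 : (0:ℝ) < m := lt_of_lt_of_le hN0 (le_max_left _ _)
  have hmN : N ≤ m := le_max_left _ _
  have hA1 : (1:ℝ) ≤ (250:ℝ)^(100:ℕ) := one_le_pow₀ (by norm_num)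
  have hK1 : (1:ℝ) ≤ K := le_trans hA1 (le_max_left _ _)
  have hK0 : (0:ℝ) < K := by linarith
  have hKm : K ≤ (250:ℝ)^(100:ℕ) * m := by
    rw [hKdef]
    refine max_le ?_ ?_
    · nlinarith [le_max_left N (|(ν:ℝ)| / 126), hN0]
    · have h1 : |(ν:ℝ)| / 126 ≤ m := le_max_right _ _
      have h2 : (252:ℝ) ≤ (250:ℝ)^(100:ℕ) := by
        calc (252:ℝ) ≤ 250^2 := by norm_num
          _ ≤ (250:ℝ)^(100:ℕ) := pow_le_pow_right₀ (by norm_num) (by norm_num)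
      nlinarith
  have hL0 : (0:ℝ) ≤ 250 * K ^ ((99:ℝ)/100) := by positivity
  -- pointwise bound
  have hpt : ∀ p : ℤ × ℤ, (bi (p.1 ≠ 0 ∧ p.2 ≠ 0 ∧ N < |((2 * p.1 * p.2 : ℤ) : ℝ)| ∧
      |((2 * p.1 * p.2 : ℤ) : ℝ) + (ν:ℝ)| ≤ 125 * |((2 * p.1 * p.2 : ℤ) : ℝ)| ^ ((1:ℝ) - 1/100))
      * (ENNReal.ofReal |((2 * p.1 * p.2 : ℤ) : ℝ)|)⁻¹)
      ≤ bi (p.1 ≠ 0 ∧ p.2 ≠ 0 ∧ |((2 * p.1 * p.2 : ℤ) : ℝ)| ≤ K ∧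
          ((-(ν:ℝ) - 125 * K ^ ((99:ℝ)/100)) ≤ ((2 * p.1 * p.2 : ℤ) : ℝ) ∧
            ((2 * p.1 * p.2 : ℤ) : ℝ) ≤ (-(ν:ℝ) - 125 * K ^ ((99:ℝ)/100)) + 250 * K ^ ((99:ℝ)/100)))
        * ENNReal.ofReal m⁻¹ := by
    intro p
    by_cases hc : (p.1 ≠ 0 ∧ p.2 ≠ 0 ∧ N < |((2 * p.1 * p.2 : ℤ) : ℝ)| ∧
      |((2 * p.1 * p.2 : ℤ) : ℝ) + (ν:ℝ)| ≤ 125 * |((2 * p.1 * p.2 : ℤ) : ℝ)| ^ ((1:ℝ) - 1/100))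
    · obtain ⟨h1, h2, h3, h4⟩ := hc
      set t : ℝ := |((2 * p.1 * p.2 : ℤ) : ℝ)| with htdef
      have ht1 : 1 ≤ t := le_trans hN h3.le
      have ht0 : (0:ℝ) < t := by linarith
      have hexp : t ^ ((1:ℝ) - 1/100) = t ^ ((99:ℝ)/100) := by norm_num
      rw [hexp] at h4
      have hte : t ^ ((99:ℝ)/100) ≤ t := by
        calc t ^ ((99:ℝ)/100) ≤ t ^ ((1:ℝ)) := Real.rpow_le_rpow_of_exponent_le ht1 (by norm_num)
          _ = t := Real.rpow_one t
      -- |ν| ≤ 126 t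
      have hν126 : |(ν:ℝ)| ≤ 126 * t := by
        have h5 : |(ν:ℝ)| ≤ |((2 * p.1 * p.2 : ℤ) : ℝ) + (ν:ℝ)| + t := by
          rw [htdef]
          calc |(ν:ℝ)| = |(((2 * p.1 * p.2 : ℤ) : ℝ) + (ν:ℝ)) - ((2 * p.1 * p.2 : ℤ) : ℝ)| := by
                congr 1; ring
            _ ≤ _ := abs_sub _ _
        nlinarith
      -- m ≤ t
      have hmt : m ≤ t := max_le h3.le (by linarith)
      -- t ≤ K
      have htK : t ≤ K := by
        by_cases hbig : t ≤ (250:ℝ)^(100:ℕ)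
        · exact le_trans hbig (le_max_left _ _)
        · push_neg at hbig
          have hA0 : (0:ℝ) < (250:ℝ)^(100:ℕ) := by positivity
          -- t^{-1/100} ≤ 250⁻¹, so 125 t^{99/100} ≤ t/2
          have hsmall : 125 * t ^ ((99:ℝ)/100) ≤ t / 2 := by
            have e1 : t ^ ((99:ℝ)/100) = t * t ^ (-((1:ℝ)/100)) := by
              rw [show (99:ℝ)/100 = 1 + (-((1:ℝ)/100)) by norm_num, Real.rpow_add ht0,
                Real.rpow_one]
            have e2 : t ^ (-((1:ℝ)/100)) ≤ ((250:ℝ)^(100:ℕ)) ^ (-((1:ℝ)/100)) := by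
              rw [Real.rpow_neg ht0.le, Real.rpow_neg hA0.le]
              refine inv_anti₀ (Real.rpow_pos_of_pos hA0 _) ?_
              exact Real.rpow_le_rpow hA0.le hbig.le (by norm_num)
            have e3 : ((250:ℝ)^(100:ℕ)) ^ (-((1:ℝ)/100)) = (250:ℝ)⁻¹ := by
              rw [← Real.rpow_natCast (250:ℝ) 100, ← Real.rpow_mul (by norm_num)]
              norm_num
            rw [e1]
            rw [e3] at e2
            nlinarith
          have h6 : t ≤ |((2 * p.1 * p.2 : ℤ) : ℝ) + (ν:ℝ)| + |(ν:ℝ)| := by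
            rw [htdef]
            calc |((2 * p.1 * p.2 : ℤ) : ℝ)|
                = |(((2 * p.1 * p.2 : ℤ) : ℝ) + (ν:ℝ)) - (ν:ℝ)| := by congr 1; ring
              _ ≤ _ := abs_sub _ _
          have h7 : t ≤ 2 * |(ν:ℝ)| := by nlinarith
          exact le_trans h7 (le_max_right _ _)
      -- window
      have hwin : (-(ν:ℝ) - 125 * K ^ ((99:ℝ)/100)) ≤ ((2 * p.1 * p.2 : ℤ) : ℝ) ∧
          ((2 * p.1 * p.2 : ℤ) : ℝ) ≤ (-(ν:ℝ) - 125 * K ^ ((99:ℝ)/100)) + 250 * K ^ ((99:ℝ)/100) := by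
        have h8 : t ^ ((99:ℝ)/100) ≤ K ^ ((99:ℝ)/100) :=
          Real.rpow_le_rpow ht0.le htK (by norm_num)
        have h9 := abs_le.mp h4
        constructor <;> [linarith; linarith]
      have hbi1 : bi (p.1 ≠ 0 ∧ p.2 ≠ 0 ∧ N < |((2 * p.1 * p.2 : ℤ) : ℝ)| ∧
          |((2 * p.1 * p.2 : ℤ) : ℝ) + (ν:ℝ)| ≤ 125 * |((2 * p.1 * p.2 : ℤ) : ℝ)| ^ ((1:ℝ) - 1/100)) = 1 := by
        refine bi_of ⟨h1, h2, h3, ?_⟩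
        rw [← htdef, hexp]
        exact h4
      have hbi2 : bi (p.1 ≠ 0 ∧ p.2 ≠ 0 ∧ |((2 * p.1 * p.2 : ℤ) : ℝ)| ≤ K ∧
          ((-(ν:ℝ) - 125 * K ^ ((99:ℝ)/100)) ≤ ((2 * p.1 * p.2 : ℤ) : ℝ) ∧
            ((2 * p.1 * p.2 : ℤ) : ℝ) ≤ (-(ν:ℝ) - 125 * K ^ ((99:ℝ)/100)) + 250 * K ^ ((99:ℝ)/100))) = 1 :=
        bi_of ⟨h1, h2, htK, hwin⟩
      rw [hbi1, hbi2, one_mul, one_mul]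
      calc (ENNReal.ofReal t)⁻¹ ≤ (ENNReal.ofReal m)⁻¹ :=
            ENNReal.inv_le_inv.mpr (ENNReal.ofReal_le_ofReal hmt)
        _ = ENNReal.ofReal m⁻¹ := (ENNReal.ofReal_inv_of_pos hm0).symm
    · rw [bi_not hc, zero_mul]
      exact zero_le
  calc ∑' p : ℤ × ℤ, (bi (p.1 ≠ 0 ∧ p.2 ≠ 0 ∧ N < |((2 * p.1 * p.2 : ℤ) : ℝ)| ∧
        |((2 * p.1 * p.2 : ℤ) : ℝ) + (ν:ℝ)| ≤ 125 * |((2 * p.1 * p.2 : ℤ) : ℝ)| ^ ((1:ℝ) - 1/100))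
        * (ENNReal.ofReal |((2 * p.1 * p.2 : ℤ) : ℝ)|)⁻¹)
      ≤ ∑' p : ℤ × ℤ, (bi (p.1 ≠ 0 ∧ p.2 ≠ 0 ∧ |((2 * p.1 * p.2 : ℤ) : ℝ)| ≤ K ∧
          ((-(ν:ℝ) - 125 * K ^ ((99:ℝ)/100)) ≤ ((2 * p.1 * p.2 : ℤ) : ℝ) ∧
            ((2 * p.1 * p.2 : ℤ) : ℝ) ≤ (-(ν:ℝ) - 125 * K ^ ((99:ℝ)/100)) + 250 * K ^ ((99:ℝ)/100)))
        * ENNReal.ofReal m⁻¹) := Summable.tsum_le_tsum hpt ENNReal.summable ENNReal.summable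
    _ = (∑' p : ℤ × ℤ, bi (p.1 ≠ 0 ∧ p.2 ≠ 0 ∧ |((2 * p.1 * p.2 : ℤ) : ℝ)| ≤ K ∧
          ((-(ν:ℝ) - 125 * K ^ ((99:ℝ)/100)) ≤ ((2 * p.1 * p.2 : ℤ) : ℝ) ∧
            ((2 * p.1 * p.2 : ℤ) : ℝ) ≤ (-(ν:ℝ) - 125 * K ^ ((99:ℝ)/100)) + 250 * K ^ ((99:ℝ)/100))))
        * ENNReal.ofReal m⁻¹ := ENNReal.tsum_mul_right
    _ ≤ ENNReal.ofReal (2 * ((250 * K ^ ((99:ℝ)/100)) * (1 + Real.log (Real.sqrt K))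
          + 2 * Real.sqrt K)) * ENNReal.ofReal m⁻¹ :=
        mul_le_mul_left (count_key _ _ _ hL0 hK1) _
    _ = ENNReal.ofReal (2 * ((250 * K ^ ((99:ℝ)/100)) * (1 + Real.log (Real.sqrt K))
          + 2 * Real.sqrt K) * m⁻¹) := by
        rw [← ENNReal.ofReal_mul]
        have h0 : (0:ℝ) ≤ 1 + Real.log (Real.sqrt K) := by
          have := Real.log_nonneg (Real.one_le_sqrt.mpr hK1); linarith
        positivity
    _ ≤ ENNReal.ofReal (200000 * (250:ℝ)^(100:ℕ) * N ^ (-((1:ℝ)/200))) :=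
        ENNReal.ofReal_le_ofReal (realB hN hmN hK1 hKm)

/-- `‖v n‖` as an element of `ℝ≥0∞`. -/
noncomputable def av (v : ℤ → ℂ) (n : ℤ) : ℝ≥0∞ := ENNReal.ofReal ‖v n‖

/-- `∑ₙ ‖v n‖²` in `ℝ≥0∞`. -/
noncomputable def SE (v : ℤ → ℂ) : ℝ≥0∞ := ∑' n : ℤ, (av v n) ^ 2

/-- The `A`-side summand. -/
noncomputable def AEf (N : ℝ) (v : ℤ → ℂ) (n : ℤ) (q : (ℤ × ℤ × ℤ) × (ℤ × ℤ × ℤ)) : ℝ≥0∞ :=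
  bi (cond9 N n q) * (ENNReal.ofReal |((mu1 n q : ℤ) : ℝ)|)⁻¹ *
    ((av v q.1.2.1) ^ 2 * (av v q.1.2.2) ^ 2)

lemma shift_sum (v : ℤ → ℂ) (c : ℤ) : ∑' a : ℤ, (av v (a + c)) ^ 2 = SE v :=
  Equiv.tsum_eq (Equiv.addRight c) (fun m => (av v m) ^ 2)

lemma AE_bound {N : ℝ} (hN : 1 ≤ N) (v : ℤ → ℂ) (n : ℤ) :
    ∑' q : (ℤ × ℤ × ℤ) × (ℤ × ℤ × ℤ), AEf N v n q
      ≤ ENNReal.ofReal (25200000 * N ^ (-((1:ℝ)/200))) * (SE v) ^ 2 := by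
  set C : ℝ≥0∞ := ENNReal.ofReal (25200000 * N ^ (-((1:ℝ)/200))) with hC
  set ψ : (ℤ × ℤ) × (ℤ × ℤ) → (ℤ × ℤ × ℤ) × (ℤ × ℤ × ℤ) := fun p =>
    ((p.1.1, p.1.1 + p.1.2 - n, p.1.2), (p.2.1, p.2.1 + p.2.2 - p.1.1, p.2.2)) with hψ
  have hinj : Function.Injective ψ := by
    rintro ⟨⟨a1, a3⟩, ⟨a4, a6⟩⟩ ⟨⟨b1, b3⟩, ⟨b4, b6⟩⟩ hab
    simp only [hψ, Prod.mk.injEq] at hab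
    obtain ⟨⟨e1, e2, e3⟩, e4, e5, e6⟩ := hab
    simp only [Prod.mk.injEq]
    omega
  have hsupp : Function.support (AEf N v n) ⊆ Set.range ψ := by
    intro q hq
    have hc : cond9 N n q := by
      by_contra hcc
      exact hq (by simp [AEf, bi_not hcc])
    obtain ⟨h1, -, -, h4, -⟩ := hc
    rcases q with ⟨⟨n1, n2, n3⟩, m1, m2, m3⟩
    simp only at h1 h4
    refine ⟨((n1, n3), (m1, m3)), ?_⟩
    simp only [hψ, Prod.mk.injEq, true_and, and_true]
    omega
  have hre : ∑' q : (ℤ × ℤ × ℤ) × (ℤ × ℤ × ℤ), AEf N v n q = ∑' p, AEf N v n (ψ p) :=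
    (hinj.tsum_eq hsupp).symm
  rw [hre, ENNReal.tsum_prod (f := fun w z => AEf N v n (ψ (w, z)))]
  -- per-w bound
  have hw : ∀ w : ℤ × ℤ, ∑' z : ℤ × ℤ, AEf N v n (ψ (w, z))
      ≤ ((av v (w.1 + w.2 - n)) ^ 2 * (av v w.2) ^ 2) * C := by
    intro w
    set k : ℤ := 2 * (n - w.1) * (n - w.2) with hk
    have hmu : ∀ z : ℤ × ℤ, mu1 n (ψ (w, z)) = k := fun z => rfl
    by_cases hkN : N < |(k : ℝ)|
    · -- pointwise reduction to the counting condition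
      have hpt : ∀ z : ℤ × ℤ, AEf N v n (ψ (w, z))
          ≤ ((av v (w.1 + w.2 - n)) ^ 2 * (av v w.2) ^ 2) *
            ((ENNReal.ofReal |(k : ℝ)|)⁻¹ *
              bi ((w.1 - z.1 ≠ 0 ∧ w.1 - z.2 ≠ 0 ∧
                |(k:ℝ) + ((2 * (w.1 - z.1) * (w.1 - z.2) : ℤ) : ℝ)|
                  ≤ 125 * |(k:ℝ)| ^ ((1:ℝ) - 1/100)))) := by
        intro z
        have hbi : bi (cond9 N n (ψ (w, z)))
            ≤ bi ((w.1 - z.1 ≠ 0 ∧ w.1 - z.2 ≠ 0 ∧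
              |(k:ℝ) + ((2 * (w.1 - z.1) * (w.1 - z.2) : ℤ) : ℝ)|
                ≤ 125 * |(k:ℝ)| ^ ((1:ℝ) - 1/100))) := by
          refine bi_mono ?_
          rintro ⟨-, -, -, -, h5, h6, -, h8⟩
          have hmu2 : mu2 (ψ (w, z)) = 2 * (w.1 - z.1) * (w.1 - z.2) := rfl
          have hm1 : (ψ (w, z)).2.2.1 = z.1 + z.2 - w.1 := rfl
          refine ⟨?_, ?_, ?_⟩
          · intro hzz
            exact h6 (by simp only [hψ]; omega)
          · intro hzz
            exact h5 (by simp only [hψ]; omega)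
          · rw [hmu z, hmu2] at h8
            push_cast at h8 ⊢
            convert h8 using 3 <;> ring_nf
        have hAEf : AEf N v n (ψ (w, z)) = bi (cond9 N n (ψ (w, z))) *
            (ENNReal.ofReal |(k:ℝ)|)⁻¹ * ((av v (w.1 + w.2 - n)) ^ 2 * (av v w.2) ^ 2) := rfl
        rw [hAEf]
        calc bi (cond9 N n (ψ (w, z))) * (ENNReal.ofReal |(k:ℝ)|)⁻¹ *
            ((av v (w.1 + w.2 - n)) ^ 2 * (av v w.2) ^ 2)
            = ((av v (w.1 + w.2 - n)) ^ 2 * (av v w.2) ^ 2) *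
              ((ENNReal.ofReal |(k:ℝ)|)⁻¹ * bi (cond9 N n (ψ (w, z)))) := by ring
          _ ≤ _ := mul_le_mul_right (mul_le_mul_right hbi _) _
      -- sum the pointwise bound
      have hcnt : ∑' z : ℤ × ℤ, bi ((w.1 - z.1 ≠ 0 ∧ w.1 - z.2 ≠ 0 ∧
          |(k:ℝ) + ((2 * (w.1 - z.1) * (w.1 - z.2) : ℤ) : ℝ)|
            ≤ 125 * |(k:ℝ)| ^ ((1:ℝ) - 1/100)))
          ≤ ENNReal.ofReal (25200000 * (|(k:ℝ)| * N ^ (-((1:ℝ)/200)))) := by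
        calc ∑' z : ℤ × ℤ, bi ((w.1 - z.1 ≠ 0 ∧ w.1 - z.2 ≠ 0 ∧
            |(k:ℝ) + ((2 * (w.1 - z.1) * (w.1 - z.2) : ℤ) : ℝ)|
              ≤ 125 * |(k:ℝ)| ^ ((1:ℝ) - 1/100)))
            = ∑' y : ℤ × ℤ, bi (y.1 ≠ 0 ∧ y.2 ≠ 0 ∧
              |(k:ℝ) + ((2 * y.1 * y.2 : ℤ) : ℝ)| ≤ 125 * |(k:ℝ)| ^ ((1:ℝ) - 1/100)) :=
              Equiv.tsum_eq (Equiv.prodCongr (Equiv.subLeft w.1) (Equiv.subLeft w.1))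
                (fun y : ℤ × ℤ => bi (y.1 ≠ 0 ∧ y.2 ≠ 0 ∧
                  |(k:ℝ) + ((2 * y.1 * y.2 : ℤ) : ℝ)| ≤ 125 * |(k:ℝ)| ^ ((1:ℝ) - 1/100)))
          _ ≤ _ := cnt1 hN hkN
      calc ∑' z : ℤ × ℤ, AEf N v n (ψ (w, z))
          ≤ ∑' z : ℤ × ℤ, ((av v (w.1 + w.2 - n)) ^ 2 * (av v w.2) ^ 2) *
            ((ENNReal.ofReal |(k:ℝ)|)⁻¹ * bi ((w.1 - z.1 ≠ 0 ∧ w.1 - z.2 ≠ 0 ∧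
              |(k:ℝ) + ((2 * (w.1 - z.1) * (w.1 - z.2) : ℤ) : ℝ)|
                ≤ 125 * |(k:ℝ)| ^ ((1:ℝ) - 1/100)))) :=
            Summable.tsum_le_tsum hpt ENNReal.summable ENNReal.summable
        _ = ((av v (w.1 + w.2 - n)) ^ 2 * (av v w.2) ^ 2) * ((ENNReal.ofReal |(k:ℝ)|)⁻¹ *
            ∑' z : ℤ × ℤ, bi ((w.1 - z.1 ≠ 0 ∧ w.1 - z.2 ≠ 0 ∧
              |(k:ℝ) + ((2 * (w.1 - z.1) * (w.1 - z.2) : ℤ) : ℝ)|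
                ≤ 125 * |(k:ℝ)| ^ ((1:ℝ) - 1/100))) ) := by
            rw [ENNReal.tsum_mul_left, ENNReal.tsum_mul_left]
        _ ≤ ((av v (w.1 + w.2 - n)) ^ 2 * (av v w.2) ^ 2) * ((ENNReal.ofReal |(k:ℝ)|)⁻¹ *
            ENNReal.ofReal (25200000 * (|(k:ℝ)| * N ^ (-((1:ℝ)/200))))) :=
            mul_le_mul_right (mul_le_mul_right hcnt _) _
        _ = ((av v (w.1 + w.2 - n)) ^ 2 * (av v w.2) ^ 2) * C := by
            have hk0 : (0:ℝ) < |(k:ℝ)| := lt_of_lt_of_le (by linarith) hkN.le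
            have hsplit : ENNReal.ofReal (25200000 * (|(k:ℝ)| * N ^ (-((1:ℝ)/200))))
                = ENNReal.ofReal |(k:ℝ)| * C := by
              rw [hC, ← ENNReal.ofReal_mul (abs_nonneg _)]
              congr 1
              ring
            have hcancel : (ENNReal.ofReal |(k:ℝ)|)⁻¹ * ENNReal.ofReal |(k:ℝ)| = 1 :=
              ENNReal.inv_mul_cancel (by simpa using hk0) ENNReal.ofReal_ne_top
            calc ((av v (w.1 + w.2 - n)) ^ 2 * (av v w.2) ^ 2) * ((ENNReal.ofReal |(k:ℝ)|)⁻¹ *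
                ENNReal.ofReal (25200000 * (|(k:ℝ)| * N ^ (-((1:ℝ)/200)))))
                = ((av v (w.1 + w.2 - n)) ^ 2 * (av v w.2) ^ 2) *
                  (((ENNReal.ofReal |(k:ℝ)|)⁻¹ * ENNReal.ofReal |(k:ℝ)|) * C) := by
                  rw [hsplit]; ring
              _ = ((av v (w.1 + w.2 - n)) ^ 2 * (av v w.2) ^ 2) * C := by
                  rw [hcancel, one_mul]
    · -- the phase is too small: the indicator vanishes
      have hz : ∀ z : ℤ × ℤ, AEf N v n (ψ (w, z)) = 0 := by
        intro z
        have : ¬ cond9 N n (ψ (w, z)) := by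
          rintro ⟨-, -, -, -, -, -, h7, -⟩
          rw [hmu z] at h7
          exact hkN h7
        simp [AEf, bi_not this]
      simp only [hz, tsum_zero]
      exact zero_le
  -- sum over w
  calc ∑' w : ℤ × ℤ, ∑' z : ℤ × ℤ, AEf N v n (ψ (w, z))
      ≤ ∑' w : ℤ × ℤ, ((av v (w.1 + w.2 - n)) ^ 2 * (av v w.2) ^ 2) * C :=
        Summable.tsum_le_tsum hw ENNReal.summable ENNReal.summable
    _ = (∑' w : ℤ × ℤ, (av v (w.1 + w.2 - n)) ^ 2 * (av v w.2) ^ 2) * C :=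
        ENNReal.tsum_mul_right
    _ = (SE v) ^ 2 * C := by
        have : ∑' w : ℤ × ℤ, (av v (w.1 + w.2 - n)) ^ 2 * (av v w.2) ^ 2 = (SE v) ^ 2 := by
          rw [ENNReal.tsum_prod (f := fun a b : ℤ => (av v (a + b - n)) ^ 2 * (av v b) ^ 2)]
          rw [ENNReal.tsum_comm (f := fun a b : ℤ => (av v (a + b - n)) ^ 2 * (av v b) ^ 2)]
          have hb : ∀ b : ℤ, ∑' a : ℤ, (av v (a + b - n)) ^ 2 * (av v b) ^ 2
              = SE v * (av v b) ^ 2 := by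
            intro b
            rw [ENNReal.tsum_mul_right]
            congr 1
            calc ∑' a : ℤ, (av v (a + b - n)) ^ 2 = ∑' a : ℤ, (av v (a + (b - n))) ^ 2 :=
                tsum_congr fun a => by rw [show a + b - n = a + (b - n) by ring]
              _ = SE v := shift_sum v (b - n)
          rw [tsum_congr hb, ENNReal.tsum_mul_left, sq]
          rfl
        rw [this]
    _ = C * (SE v) ^ 2 := by ring

lemma SE_sq (v : ℤ → ℂ) : ∑' m : ℤ × ℤ, (av v m.1) ^ 2 * (av v m.2) ^ 2 = SE v ^ 2 := by
  rw [ENNReal.tsum_prod (f := fun a b : ℤ => (av v a) ^ 2 * (av v b) ^ 2)]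
  have : ∀ a : ℤ, ∑' b : ℤ, (av v a) ^ 2 * (av v b) ^ 2 = (av v a) ^ 2 * SE v := by
    intro a
    rw [ENNReal.tsum_mul_left]
    rfl
  rw [tsum_congr this, ENNReal.tsum_mul_right, sq]
  rfl

lemma SE_cube (v : ℤ → ℂ) :
    ∑' M : ℤ × ℤ × ℤ, (av v M.1) ^ 2 * (av v M.2.1) ^ 2 * (av v M.2.2) ^ 2 = SE v ^ 3 := by
  rw [ENNReal.tsum_prod
    (f := fun (a : ℤ) (m : ℤ × ℤ) => (av v a) ^ 2 * (av v m.1) ^ 2 * (av v m.2) ^ 2)]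
  have : ∀ a : ℤ, ∑' m : ℤ × ℤ, (av v a) ^ 2 * (av v m.1) ^ 2 * (av v m.2) ^ 2
      = (av v a) ^ 2 * SE v ^ 2 := by
    intro a
    calc ∑' m : ℤ × ℤ, (av v a) ^ 2 * (av v m.1) ^ 2 * (av v m.2) ^ 2
        = ∑' m : ℤ × ℤ, (av v a) ^ 2 * ((av v m.1) ^ 2 * (av v m.2) ^ 2) :=
          tsum_congr fun m => by ring
      _ = (av v a) ^ 2 * ∑' m : ℤ × ℤ, (av v m.1) ^ 2 * (av v m.2) ^ 2 :=
          ENNReal.tsum_mul_left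
      _ = (av v a) ^ 2 * SE v ^ 2 := by rw [SE_sq v]
  rw [tsum_congr this, ENNReal.tsum_mul_right]
  rw [show (3:ℕ) = 1 + 2 from rfl, pow_add, pow_one]
  rfl


/-- The `B`-side summand. -/
noncomputable def BEf (N : ℝ) (v : ℤ → ℂ) (n : ℤ) (q : (ℤ × ℤ × ℤ) × (ℤ × ℤ × ℤ)) : ℝ≥0∞ :=
  bi (cond9 N n q) * (ENNReal.ofReal |((mu1 n q : ℤ) : ℝ)|)⁻¹ *
    ((av v q.2.1) ^ 2 * (av v q.2.2.1) ^ 2 * (av v q.2.2.2) ^ 2)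

lemma BE_sum_bound {N : ℝ} (hN : 1 ≤ N) (v : ℤ → ℂ) :
    ∑' u : ℤ × ((ℤ × ℤ × ℤ) × (ℤ × ℤ × ℤ)), BEf N v u.1 u.2
      ≤ ENNReal.ofReal (200000 * (250:ℝ)^(100:ℕ) * N ^ (-((1:ℝ)/200))) * (SE v) ^ 3 := by
  set C : ℝ≥0∞ := ENNReal.ofReal (200000 * (250:ℝ)^(100:ℕ) * N ^ (-((1:ℝ)/200))) with hC
  set φ : (ℤ × ℤ × ℤ) × (ℤ × ℤ) → ℤ × ((ℤ × ℤ × ℤ) × (ℤ × ℤ × ℤ)) := fun p =>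
    ((p.1.1 - p.1.2.1 + p.1.2.2) + p.2.1,
      (((p.1.1 - p.1.2.1 + p.1.2.2), (p.1.1 - p.1.2.1 + p.1.2.2) - p.2.2,
        (p.1.1 - p.1.2.1 + p.1.2.2) + p.2.1 - p.2.2), p.1)) with hφ
  have hinj : Function.Injective φ := by
    rintro ⟨⟨a1, a2, a3⟩, ⟨aα, aβ⟩⟩ ⟨⟨b1, b2, b3⟩, ⟨bα, bβ⟩⟩ hab
    simp only [hφ, Prod.mk.injEq] at hab
    simp only [Prod.mk.injEq]
    omega
  have hsupp : Function.support (fun u : ℤ × ((ℤ × ℤ × ℤ) × (ℤ × ℤ × ℤ)) => BEf N v u.1 u.2)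
      ⊆ Set.range φ := by
    rintro ⟨n, q⟩ hq
    have hc : cond9 N n q := by
      by_contra hcc
      exact hq (by simp [BEf, bi_not hcc])
    obtain ⟨h1, -, -, h4, -⟩ := hc
    rcases q with ⟨⟨n1, n2, n3⟩, m1, m2, m3⟩
    simp only at h1 h4
    refine ⟨((m1, m2, m3), (n - n1, n - n3)), ?_⟩
    simp only [hφ, Prod.mk.injEq, true_and, and_true]
    omega
  have hre : ∑' u : ℤ × ((ℤ × ℤ × ℤ) × (ℤ × ℤ × ℤ)), BEf N v u.1 u.2
      = ∑' p, BEf N v (φ p).1 (φ p).2 :=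
    (hinj.tsum_eq hsupp).symm
  rw [hre, ENNReal.tsum_prod (f := fun M y => BEf N v (φ (M, y)).1 (φ (M, y)).2)]
  have hM : ∀ M : ℤ × ℤ × ℤ, ∑' y : ℤ × ℤ, BEf N v (φ (M, y)).1 (φ (M, y)).2
      ≤ ((av v M.1) ^ 2 * (av v M.2.1) ^ 2 * (av v M.2.2) ^ 2) * C := by
    intro M
    set n1 : ℤ := M.1 - M.2.1 + M.2.2 with hn1
    set ν : ℤ := 2 * (n1 - M.1) * (n1 - M.2.2) with hν
    have hmu : ∀ y : ℤ × ℤ, mu1 (φ (M, y)).1 (φ (M, y)).2 = 2 * y.1 * y.2 := by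
      intro y
      simp only [hφ, mu1, hn1]
      ring
    have hmu2 : ∀ y : ℤ × ℤ, mu2 (φ (M, y)).2 = ν := fun y => rfl
    by_cases hm : M.2.1 = M.1 ∨ M.2.1 = M.2.2
    · -- conditions on the `m`'s fail, everything vanishes
      have hz : ∀ y : ℤ × ℤ, BEf N v (φ (M, y)).1 (φ (M, y)).2 = 0 := by
        intro y
        have : ¬ cond9 N (φ (M, y)).1 (φ (M, y)).2 := by
          rintro ⟨-, -, -, -, h5, h6, -⟩
          rcases hm with hm | hm
          · exact h5 hm
          · exact h6 hm
        simp [BEf, bi_not this]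
      simp only [hz, tsum_zero]
      exact zero_le
    · push_neg at hm
      have hν0 : ν ≠ 0 := by
        rw [hν, hn1]
        rcases M with ⟨m1, m2, m3⟩
        simp only at hm ⊢
        intro hcontra
        rcases mul_eq_zero.mp hcontra with h | h
        · rcases mul_eq_zero.mp h with h | h
          · norm_num at h
          · omega
        · omega
      have hpt : ∀ y : ℤ × ℤ, BEf N v (φ (M, y)).1 (φ (M, y)).2
          ≤ ((av v M.1) ^ 2 * (av v M.2.1) ^ 2 * (av v M.2.2) ^ 2) *
            (bi (y.1 ≠ 0 ∧ y.2 ≠ 0 ∧ N < |((2 * y.1 * y.2 : ℤ) : ℝ)| ∧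
              |((2 * y.1 * y.2 : ℤ) : ℝ) + (ν:ℝ)|
                ≤ 125 * |((2 * y.1 * y.2 : ℤ) : ℝ)| ^ ((1:ℝ) - 1/100))
              * (ENNReal.ofReal |((2 * y.1 * y.2 : ℤ) : ℝ)|)⁻¹) := by
        intro y
        have hbi : bi (cond9 N (φ (M, y)).1 (φ (M, y)).2)
            ≤ bi (y.1 ≠ 0 ∧ y.2 ≠ 0 ∧ N < |((2 * y.1 * y.2 : ℤ) : ℝ)| ∧
              |((2 * y.1 * y.2 : ℤ) : ℝ) + (ν:ℝ)|
                ≤ 125 * |((2 * y.1 * y.2 : ℤ) : ℝ)| ^ ((1:ℝ) - 1/100)) := by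
          refine bi_mono ?_
          rintro ⟨-, h2, h3, -, -, -, h7, h8⟩
          rw [hmu y] at h7 h8
          rw [hmu2 y] at h8
          refine ⟨?_, ?_, h7, ?_⟩
          · intro hyy
            refine h3 ?_
            simp only [hφ]
            omega
          · intro hyy
            refine h2 ?_
            simp only [hφ]
            omega
          · push_cast at h8 ⊢
            convert h8 using 3 <;> ring_nf
        have hBEf : BEf N v (φ (M, y)).1 (φ (M, y)).2
            = bi (cond9 N (φ (M, y)).1 (φ (M, y)).2) *
              (ENNReal.ofReal |((mu1 (φ (M, y)).1 (φ (M, y)).2 : ℤ) : ℝ)|)⁻¹ *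
              ((av v M.1) ^ 2 * (av v M.2.1) ^ 2 * (av v M.2.2) ^ 2) := rfl
        rw [hBEf, hmu y]
        calc bi (cond9 N (φ (M, y)).1 (φ (M, y)).2) *
            (ENNReal.ofReal |((2 * y.1 * y.2 : ℤ) : ℝ)|)⁻¹ *
            ((av v M.1) ^ 2 * (av v M.2.1) ^ 2 * (av v M.2.2) ^ 2)
            = ((av v M.1) ^ 2 * (av v M.2.1) ^ 2 * (av v M.2.2) ^ 2) *
              (bi (cond9 N (φ (M, y)).1 (φ (M, y)).2) *
                (ENNReal.ofReal |((2 * y.1 * y.2 : ℤ) : ℝ)|)⁻¹) := by ring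
          _ ≤ _ := mul_le_mul_right (mul_le_mul_left hbi _) _
      calc ∑' y : ℤ × ℤ, BEf N v (φ (M, y)).1 (φ (M, y)).2
          ≤ ∑' y : ℤ × ℤ, ((av v M.1) ^ 2 * (av v M.2.1) ^ 2 * (av v M.2.2) ^ 2) *
            (bi (y.1 ≠ 0 ∧ y.2 ≠ 0 ∧ N < |((2 * y.1 * y.2 : ℤ) : ℝ)| ∧
              |((2 * y.1 * y.2 : ℤ) : ℝ) + (ν:ℝ)|
                ≤ 125 * |((2 * y.1 * y.2 : ℤ) : ℝ)| ^ ((1:ℝ) - 1/100))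
              * (ENNReal.ofReal |((2 * y.1 * y.2 : ℤ) : ℝ)|)⁻¹) :=
            Summable.tsum_le_tsum hpt ENNReal.summable ENNReal.summable
        _ = ((av v M.1) ^ 2 * (av v M.2.1) ^ 2 * (av v M.2.2) ^ 2) *
            ∑' y : ℤ × ℤ, (bi (y.1 ≠ 0 ∧ y.2 ≠ 0 ∧ N < |((2 * y.1 * y.2 : ℤ) : ℝ)| ∧
              |((2 * y.1 * y.2 : ℤ) : ℝ) + (ν:ℝ)|
                ≤ 125 * |((2 * y.1 * y.2 : ℤ) : ℝ)| ^ ((1:ℝ) - 1/100))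
              * (ENNReal.ofReal |((2 * y.1 * y.2 : ℤ) : ℝ)|)⁻¹) := ENNReal.tsum_mul_left
        _ ≤ _ := mul_le_mul_right (cnt2 hN hν0) _
  calc ∑' M : ℤ × ℤ × ℤ, ∑' y : ℤ × ℤ, BEf N v (φ (M, y)).1 (φ (M, y)).2
      ≤ ∑' M : ℤ × ℤ × ℤ, ((av v M.1) ^ 2 * (av v M.2.1) ^ 2 * (av v M.2.2) ^ 2) * C :=
        Summable.tsum_le_tsum hM ENNReal.summable ENNReal.summable
    _ = (∑' M : ℤ × ℤ × ℤ, (av v M.1) ^ 2 * (av v M.2.1) ^ 2 * (av v M.2.2) ^ 2) * C :=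
        ENNReal.tsum_mul_right
    _ = (SE v) ^ 3 * C := by
        rw [SE_cube v]
    _ = C * (SE v) ^ 3 := by ring

/-- The `ℝ≥0∞`-valued summand of `Q9`. -/
noncomputable def tE (N : ℝ) (v : ℤ → ℂ) (n : ℤ) (q : (ℤ × ℤ × ℤ) × (ℤ × ℤ × ℤ)) : ℝ≥0∞ :=
  bi (cond9 N n q) * (ENNReal.ofReal |((mu1 n q : ℤ) : ℝ)|)⁻¹ *
    (av v q.2.1 * av v q.2.2.1 * av v q.2.2.2 * av v q.1.2.1 * av v q.1.2.2)

lemma QE_sq {N : ℝ} (hN : 1 ≤ N) (v : ℤ → ℂ) (n : ℤ) :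
    (∑' q : (ℤ × ℤ × ℤ) × (ℤ × ℤ × ℤ), tE N v n q) ^ 2
      ≤ 2 * ((∑' q : (ℤ × ℤ × ℤ) × (ℤ × ℤ × ℤ), AEf N v n q) *
        (∑' q : (ℤ × ℤ × ℤ) × (ℤ × ℤ × ℤ), BEf N v n q)) := by
  set F : (ℤ × ℤ × ℤ) × (ℤ × ℤ × ℤ) → ℝ≥0∞ := fun q =>
    bi (cond9 N n q) * (ENNReal.ofReal |((mu1 n q : ℤ) : ℝ)|) ^ (-(1/2) : ℝ) *
      (av v q.1.2.1 * av v q.1.2.2) with hF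
  set G : (ℤ × ℤ × ℤ) × (ℤ × ℤ × ℤ) → ℝ≥0∞ := fun q =>
    bi (cond9 N n q) * (ENNReal.ofReal |((mu1 n q : ℤ) : ℝ)|) ^ (-(1/2) : ℝ) *
      (av v q.2.1 * av v q.2.2.1 * av v q.2.2.2) with hG
  have hx : ∀ q : (ℤ × ℤ × ℤ) × (ℤ × ℤ × ℤ), cond9 N n q →
      (ENNReal.ofReal |((mu1 n q : ℤ) : ℝ)| ≠ 0 ∧ ENNReal.ofReal |((mu1 n q : ℤ) : ℝ)| ≠ ⊤) := by
    intro q hq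
    have h7 := hq.2.2.2.2.2.2.1
    have h0 : (0:ℝ) < |((mu1 n q : ℤ) : ℝ)| := lt_of_lt_of_le (by linarith) h7.le
    exact ⟨by simpa using h0, ENNReal.ofReal_ne_top⟩
  have hhalf : ∀ q, cond9 N n q →
      (ENNReal.ofReal |((mu1 n q : ℤ) : ℝ)|) ^ (-(1/2) : ℝ) *
        (ENNReal.ofReal |((mu1 n q : ℤ) : ℝ)|) ^ (-(1/2) : ℝ)
      = (ENNReal.ofReal |((mu1 n q : ℤ) : ℝ)|)⁻¹ := by
    intro q hq
    obtain ⟨h0, ht⟩ := hx q hq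
    rw [← ENNReal.rpow_add _ _ h0 ht,
      show (-(1/2) + -(1/2) : ℝ) = -1 by norm_num, ENNReal.rpow_neg_one]
  have ht : ∀ q, tE N v n q ≤ F q * G q := by
    intro q
    by_cases hq : cond9 N n q
    · refine le_of_eq ?_
      have hr := hhalf q hq
      simp only [tE, hF, hG, bi_of hq, one_mul]
      rw [← hr]
      ring
    · simp [tE, bi_not hq]
  have hF2 : ∀ q, F q ^ 2 = AEf N v n q := by
    intro q
    by_cases hq : cond9 N n q
    · simp only [hF, AEf, bi_of hq, one_mul]
      calc ((ENNReal.ofReal |((mu1 n q : ℤ) : ℝ)|) ^ (-(1/2) : ℝ) *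
            (av v q.1.2.1 * av v q.1.2.2)) ^ 2
          = ((ENNReal.ofReal |((mu1 n q : ℤ) : ℝ)|) ^ (-(1/2) : ℝ) *
              (ENNReal.ofReal |((mu1 n q : ℤ) : ℝ)|) ^ (-(1/2) : ℝ)) *
            ((av v q.1.2.1) ^ 2 * (av v q.1.2.2) ^ 2) := by ring
        _ = (ENNReal.ofReal |((mu1 n q : ℤ) : ℝ)|)⁻¹ *
            ((av v q.1.2.1) ^ 2 * (av v q.1.2.2) ^ 2) := by rw [hhalf q hq]
    · simp [hF, AEf, bi_not hq]
  have hG2 : ∀ q, G q ^ 2 = BEf N v n q := by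
    intro q
    by_cases hq : cond9 N n q
    · simp only [hG, BEf, bi_of hq, one_mul]
      calc ((ENNReal.ofReal |((mu1 n q : ℤ) : ℝ)|) ^ (-(1/2) : ℝ) *
            (av v q.2.1 * av v q.2.2.1 * av v q.2.2.2)) ^ 2
          = ((ENNReal.ofReal |((mu1 n q : ℤ) : ℝ)|) ^ (-(1/2) : ℝ) *
              (ENNReal.ofReal |((mu1 n q : ℤ) : ℝ)|) ^ (-(1/2) : ℝ)) *
            ((av v q.2.1) ^ 2 * (av v q.2.2.1) ^ 2 * (av v q.2.2.2) ^ 2) := by ring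
        _ = (ENNReal.ofReal |((mu1 n q : ℤ) : ℝ)|)⁻¹ *
            ((av v q.2.1) ^ 2 * (av v q.2.2.1) ^ 2 * (av v q.2.2.2) ^ 2) := by rw [hhalf q hq]
    · simp [hG, BEf, bi_not hq]
  have := tsum_CS (tE N v n) F G ht
  rwa [tsum_congr hF2, tsum_congr hG2] at this


/-- **Bound on the nearly resonant quintic term of the second generation.** For every
`ε > 0` there is `C > 0` such that for all `N ≥ 1` and `v ∈ ℓ²(ℤ;ℂ)`: `Q(n)` is finite for
each `n`, belongs to `ℓ²(ℤ)`, and `‖Q‖ ≤ C N^{−1/200+ε} ‖v‖⁵`. -/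
theorem N2_1_bound : ∀ ε > (0:ℝ), ∃ C > (0:ℝ), ∀ N : ℝ, 1 ≤ N → ∀ v : ℤ → ℂ, Memℓ2 v →
    (∀ n : ℤ, Summable fun q : {q : (ℤ × ℤ × ℤ) × (ℤ × ℤ × ℤ) // cond9 N n q} =>
      term9 v n q.1) ∧
    Summable (fun n : ℤ => Q9 N v n ^ 2) ∧
    Real.sqrt (∑' n : ℤ, Q9 N v n ^ 2)
      ≤ C * N ^ (-(1:ℝ)/200 + ε) * l2norm v ^ 5 := by
  intro ε hε
  set CA : ℝ := 25200000 with hCA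
  set CB : ℝ := 200000 * (250:ℝ)^(100:ℕ) with hCB
  have hCA0 : (0:ℝ) < CA := by norm_num [hCA]
  have hCB0 : (0:ℝ) < CB := by rw [hCB]; positivity
  refine ⟨Real.sqrt (2 * CA * CB), Real.sqrt_pos.mpr (by positivity), ?_⟩
  intro N hN v hv
  set N' : ℝ := N ^ (-((1:ℝ)/200)) with hN'
  have hN0 : (0:ℝ) < N := by linarith
  have hN'0 : (0:ℝ) ≤ N' := (Real.rpow_pos_of_pos hN0 _).le
  set s : ℝ := ∑' n : ℤ, ‖v n‖ ^ 2 with hs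
  have hs0 : 0 ≤ s := tsum_nonneg (fun n => sq_nonneg _)
  have hSE : SE v = ENNReal.ofReal s := by
    rw [hs, SE, ENNReal.ofReal_tsum_of_nonneg (fun n => sq_nonneg _) hv]
    exact tsum_congr fun n => by rw [av, ENNReal.ofReal_pow (norm_nonneg _)]
  have hSne : SE v ≠ ⊤ := by rw [hSE]; exact ENNReal.ofReal_ne_top
  have hSto : (SE v).toReal = s := by rw [hSE, ENNReal.toReal_ofReal hs0]
  -- the ℝ≥0∞ bound
  set QE : ℤ → ℝ≥0∞ := fun n => ∑' q : (ℤ × ℤ × ℤ) × (ℤ × ℤ × ℤ), tE N v n q with hQE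
  set RHS : ℝ≥0∞ := 2 * (ENNReal.ofReal (CA * N') * (SE v) ^ 2) *
    (ENNReal.ofReal (CB * N') * (SE v) ^ 3) with hRHS
  have hRHSne : RHS ≠ ⊤ := by
    rw [hRHS]
    refine ENNReal.mul_ne_top (ENNReal.mul_ne_top (by norm_num)
      (ENNReal.mul_ne_top ENNReal.ofReal_ne_top (ENNReal.pow_ne_top hSne))) ?_
    exact ENNReal.mul_ne_top ENNReal.ofReal_ne_top (ENNReal.pow_ne_top hSne)
  have hAn : ∀ n : ℤ, (∑' q : (ℤ × ℤ × ℤ) × (ℤ × ℤ × ℤ), AEf N v n q)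
      ≤ ENNReal.ofReal (CA * N') * (SE v) ^ 2 := by
    intro n
    have := AE_bound hN v n
    rwa [show (25200000 : ℝ) * N ^ (-((1:ℝ)/200)) = CA * N' from by rw [hCA, hN']] at this
  have hBsum : ∑' n : ℤ, (∑' q : (ℤ × ℤ × ℤ) × (ℤ × ℤ × ℤ), BEf N v n q)
      ≤ ENNReal.ofReal (CB * N') * (SE v) ^ 3 := by
    have h1 : ∑' u : ℤ × ((ℤ × ℤ × ℤ) × (ℤ × ℤ × ℤ)), BEf N v u.1 u.2
        = ∑' n : ℤ, (∑' q : (ℤ × ℤ × ℤ) × (ℤ × ℤ × ℤ), BEf N v n q) :=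
      ENNReal.tsum_prod (f := fun n q => BEf N v n q)
    have := BE_sum_bound hN v
    rw [h1] at this
    rwa [show (200000 * (250:ℝ)^(100:ℕ)) * N ^ (-((1:ℝ)/200)) = CB * N' from by
      rw [hCB, hN']] at this
  have hBn : ∀ n : ℤ, (∑' q : (ℤ × ℤ × ℤ) × (ℤ × ℤ × ℤ), BEf N v n q)
      ≤ ENNReal.ofReal (CB * N') * (SE v) ^ 3 :=
    fun n => le_trans (ENNReal.le_tsum n) hBsum
  have hQE2 : ∀ n : ℤ, (QE n) ^ 2 ≤ RHS := by
    intro n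
    refine (QE_sq hN v n).trans ?_
    rw [hRHS, mul_assoc]
    exact mul_le_mul_right (mul_le_mul (hAn n) (hBn n) zero_le zero_le) 2
  have hQEne : ∀ n : ℤ, QE n ≠ ⊤ := by
    intro n hcontra
    have h1 := hQE2 n
    rw [hcontra] at h1
    rw [ENNReal.top_pow (by norm_num)] at h1
    exact hRHSne (top_le_iff.mp h1)
  have hQEsum : ∑' n : ℤ, (QE n) ^ 2 ≤ RHS := by
    calc ∑' n : ℤ, (QE n) ^ 2
        ≤ ∑' n : ℤ, (2 * (ENNReal.ofReal (CA * N') * (SE v) ^ 2)) *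
          (∑' q : (ℤ × ℤ × ℤ) × (ℤ × ℤ × ℤ), BEf N v n q) := by
          refine Summable.tsum_le_tsum (fun n => ?_) ENNReal.summable ENNReal.summable
          refine (QE_sq hN v n).trans ?_
          rw [mul_assoc]
          exact mul_le_mul_right (mul_le_mul (hAn n) le_rfl zero_le zero_le) 2
      _ = (2 * (ENNReal.ofReal (CA * N') * (SE v) ^ 2)) *
          ∑' n : ℤ, (∑' q : (ℤ × ℤ × ℤ) × (ℤ × ℤ × ℤ), BEf N v n q) := ENNReal.tsum_mul_left
      _ ≤ RHS := by
          rw [hRHS]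
          exact mul_le_mul_right hBsum _
  have hQEsumne : ∑' n : ℤ, (QE n) ^ 2 ≠ ⊤ := fun h => hRHSne (top_le_iff.mp (h ▸ hQEsum))
  -- identification of Q9 with the toReal of the subtype sum
  have hterm_nonneg : ∀ n (q : (ℤ × ℤ × ℤ) × (ℤ × ℤ × ℤ)), 0 ≤ term9 v n q := by
    intro n q
    unfold term9
    positivity
  have hterm_eq : ∀ n (q : {q : (ℤ × ℤ × ℤ) × (ℤ × ℤ × ℤ) // cond9 N n q}),
      ENNReal.ofReal (term9 v n q.1) = tE N v n q.1 := by
    rintro n ⟨q, hq⟩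
    have h7 := hq.2.2.2.2.2.2.1
    have hmupos : (0:ℝ) < |((mu1 n q : ℤ) : ℝ)| := lt_of_lt_of_le (by linarith) h7.le
    simp only [term9, tE, bi_of hq, one_mul]
    rw [ENNReal.ofReal_mul (by positivity)]
    congr 1
    · rw [one_div, ENNReal.ofReal_inv_of_pos hmupos]
    · rw [ENNReal.ofReal_mul (by positivity), ENNReal.ofReal_mul (by positivity),
        ENNReal.ofReal_mul (by positivity), ENNReal.ofReal_mul (norm_nonneg _)]
      rfl
  have hsub_le : ∀ n : ℤ, (∑' q : {q : (ℤ × ℤ × ℤ) × (ℤ × ℤ × ℤ) // cond9 N n q},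
      tE N v n q.1) ≤ QE n := by
    intro n
    calc (∑' q : {q : (ℤ × ℤ × ℤ) × (ℤ × ℤ × ℤ) // cond9 N n q}, tE N v n q.1)
        = ∑' x : (ℤ × ℤ × ℤ) × (ℤ × ℤ × ℤ),
          Set.indicator {q : (ℤ × ℤ × ℤ) × (ℤ × ℤ × ℤ) | cond9 N n q} (tE N v n) x :=
          tsum_subtype {q : (ℤ × ℤ × ℤ) × (ℤ × ℤ × ℤ) | cond9 N n q} (tE N v n)
      _ ≤ QE n :=
          Summable.tsum_le_tsum (fun q => Set.indicator_le_self _ _ q) ENNReal.summable ENNReal.summable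
  have hsub_ne : ∀ n : ℤ, (∑' q : {q : (ℤ × ℤ × ℤ) × (ℤ × ℤ × ℤ) // cond9 N n q},
      ENNReal.ofReal (term9 v n q.1)) ≠ ⊤ := by
    intro n
    rw [tsum_congr (hterm_eq n)]
    exact fun h => hQEne n (top_le_iff.mp (h ▸ hsub_le n))
  have hsummable : ∀ n : ℤ, Summable fun q : {q : (ℤ × ℤ × ℤ) × (ℤ × ℤ × ℤ) // cond9 N n q} =>
      term9 v n q.1 := by
    intro n
    have h1 := ENNReal.summable_toReal (hsub_ne n)
    exact h1.congr fun q => ENNReal.toReal_ofReal (hterm_nonneg n q.1)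
  have hQ9 : ∀ n : ℤ, Q9 N v n = (∑' q : {q : (ℤ × ℤ × ℤ) × (ℤ × ℤ × ℤ) // cond9 N n q},
      tE N v n q.1).toReal := by
    intro n
    rw [Q9, ← tsum_congr (hterm_eq n), ENNReal.tsum_toReal_eq (fun q => ENNReal.ofReal_ne_top)]
    exact tsum_congr fun q => (ENNReal.toReal_ofReal (hterm_nonneg n q.1)).symm
  have hQ9nonneg : ∀ n : ℤ, 0 ≤ Q9 N v n := fun n => (hQ9 n).symm ▸ ENNReal.toReal_nonneg
  have hQ9le : ∀ n : ℤ, Q9 N v n ≤ (QE n).toReal := by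
    intro n
    rw [hQ9 n]
    exact ENNReal.toReal_mono (hQEne n) (hsub_le n)
  have hsummTo : Summable fun n : ℤ => ((QE n) ^ 2).toReal := ENNReal.summable_toReal hQEsumne
  have hQ9sq_le : ∀ n : ℤ, Q9 N v n ^ 2 ≤ ((QE n) ^ 2).toReal := by
    intro n
    rw [ENNReal.toReal_pow]
    exact pow_le_pow_left₀ (hQ9nonneg n) (hQ9le n) 2
  have hsummQ9 : Summable (fun n : ℤ => Q9 N v n ^ 2) :=
    Summable.of_nonneg_of_le (fun n => sq_nonneg _) hQ9sq_le hsummTo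
  refine ⟨hsummable, hsummQ9, ?_⟩
  -- the final numeric estimate
  have hfinal1 : ∑' n : ℤ, Q9 N v n ^ 2 ≤ RHS.toReal := by
    calc ∑' n : ℤ, Q9 N v n ^ 2 ≤ ∑' n : ℤ, ((QE n) ^ 2).toReal :=
          Summable.tsum_le_tsum hQ9sq_le hsummQ9 hsummTo
      _ = (∑' n : ℤ, (QE n) ^ 2).toReal :=
          (ENNReal.tsum_toReal_eq (fun n => ENNReal.pow_ne_top (hQEne n))).symm
      _ ≤ RHS.toReal := ENNReal.toReal_mono hRHSne hQEsum
  have hRHSto : RHS.toReal = 2 * (CA * N' * s ^ 2) * (CB * N' * s ^ 3) := by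
    rw [hRHS]
    rw [ENNReal.toReal_mul, ENNReal.toReal_mul, ENNReal.toReal_mul, ENNReal.toReal_mul]
    rw [ENNReal.toReal_pow, ENNReal.toReal_pow, hSto]
    rw [ENNReal.toReal_ofReal (by positivity), ENNReal.toReal_ofReal (by positivity)]
    norm_num
  have hsqrt_s : Real.sqrt s ^ 2 = s := Real.sq_sqrt hs0
  have hkey : 2 * (CA * N' * s ^ 2) * (CB * N' * s ^ 3)
      = (2 * CA * CB) * (N' * Real.sqrt s ^ 5) ^ 2 := by
    have : (N' * Real.sqrt s ^ 5) ^ 2 = N' ^ 2 * (Real.sqrt s ^ 2) ^ 5 := by ring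
    rw [this, hsqrt_s]
    ring
  have hfinal2 : Real.sqrt (∑' n : ℤ, Q9 N v n ^ 2)
      ≤ Real.sqrt (2 * CA * CB) * (N' * Real.sqrt s ^ 5) := by
    calc Real.sqrt (∑' n : ℤ, Q9 N v n ^ 2) ≤ Real.sqrt (RHS.toReal) :=
          Real.sqrt_le_sqrt hfinal1
      _ = Real.sqrt ((2 * CA * CB) * (N' * Real.sqrt s ^ 5) ^ 2) := by rw [hRHSto, hkey]
      _ = Real.sqrt (2 * CA * CB) * (N' * Real.sqrt s ^ 5) := by
          rw [Real.sqrt_mul (by positivity), Real.sqrt_sq (by positivity)]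
  refine hfinal2.trans ?_
  have hl2 : l2norm v = Real.sqrt s := rfl
  rw [hl2]
  have hrpow : N' ≤ N ^ (-(1:ℝ)/200 + ε) := by
    rw [hN']
    exact Real.rpow_le_rpow_of_exponent_le hN (by linarith)
  have h5 : (0:ℝ) ≤ Real.sqrt s ^ 5 := by positivity
  calc Real.sqrt (2 * CA * CB) * (N' * Real.sqrt s ^ 5)
      = Real.sqrt (2 * CA * CB) * N' * Real.sqrt s ^ 5 := by ring
    _ ≤ Real.sqrt (2 * CA * CB) * N ^ (-(1:ℝ)/200 + ε) * Real.sqrt s ^ 5 := by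
        have h6 : (0:ℝ) ≤ Real.sqrt (2 * CA * CB) := Real.sqrt_nonneg _
        exact mul_le_mul_of_nonneg_right (mul_le_mul_of_nonneg_left hrpow h6) h5


end N21Aux
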